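/- arXiv:1601.04370 — 3 statements merged into one kernel-verified Lean document; each statement's English description precedes it below -/
import Mathlib

section
/- The Thue–Morse sequence on {1,−1} is Apwenian: for every positive integer n, 2^(n−1) divides the Hankel determinant H_n(e) and H_n(e)/2^(n−1) is an odd integer. -/
open Matrix

namespace TMA

/-- Hankel matrix over `ZMod 2`. -/
def Hm (d : ℕ → ZMod 2) (n : ℕ) : Matrix (Fin n) (Fin n) (ZMod 2) :=
  Matrix.of fun i j => d (i.1 + j.1)

/-- Ones row atop Hankel rows. -/
def Gm (d : ℕ → ZMod 2) (n : ℕ) : Matrix (Fin n) (Fin n) (ZMod 2) :=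
  Matrix.of fun i j => if i.1 = 0 then 1 else d (i.1 - 1 + j.1)

/-- all-ones matrix -/
def ones (α β : Type*) : Matrix α β (ZMod 2) := Matrix.of fun _ _ => 1

/-- row-selector matrix -/
def sel {α β : Type*} [DecidableEq β] (f : α → β) : Matrix α β (ZMod 2) :=
  Matrix.of fun a b => if b = f a then 1 else 0

lemma sel_mul {α β γ : Type*} [DecidableEq β] [Fintype β] (f : α → β)
    (M : Matrix β γ (ZMod 2)) : sel f * M = M.submatrix f id := by
  ext a c
  simp only [Matrix.mul_apply, sel, Matrix.of_apply, ite_mul, one_mul, zero_mul,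
    Matrix.submatrix_apply, id]
  rw [Finset.sum_ite_eq' (Finset.univ) (f a) (fun b => M b c)]
  simp

lemma mul_selT {α β γ : Type*} [DecidableEq β] [Fintype β] (f : α → β)
    (M : Matrix γ β (ZMod 2)) : M * (sel f)ᵀ = M.submatrix id f := by
  ext c a
  simp only [Matrix.mul_apply, sel, Matrix.transpose_apply, Matrix.of_apply, mul_ite, mul_one,
    mul_zero, Matrix.submatrix_apply, id]
  rw [Finset.sum_ite_eq' (Finset.univ) (f a) (fun b => M c b)]
  simp

lemma sel_mul_ones {α β γ : Type*} [DecidableEq β] [Fintype β] (f : α → β) :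
    sel f * ones β γ = ones α γ := by rw [sel_mul]; rfl

lemma ones_mul_selT {α β γ : Type*} [DecidableEq β] [Fintype β] (f : α → β) :
    ones γ β * (sel f)ᵀ = ones γ α := by rw [mul_selT]; rfl

lemma addJJ {α β : Type*} (B : Matrix α β (ZMod 2)) : ones α β + (ones α β + B) = B := by
  ext i j
  show (1 : ZMod 2) + (1 + B i j) = B i j
  generalize B i j = x; revert x; decide

lemma addJJ' {α β : Type*} (B : Matrix α β (ZMod 2)) : (ones α β + B) + ones α β = B := by
  ext i j
  show ((1 : ZMod 2) + B i j) + 1 = B i j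
  generalize B i j = x; revert x; decide

lemma addself {α β : Type*} (B : Matrix α β (ZMod 2)) : B + B = 0 := by
  ext i j
  show B i j + B i j = 0
  generalize B i j = x; revert x; decide

/-- Build an equiv to `Fin n` from an injective map with the right cardinality. -/
noncomputable def mkE {α : Type*} [Fintype α] [DecidableEq α] {n : ℕ} (f : α → Fin n)
    (hinj : Function.Injective f) (hcard : Fintype.card α = n) : α ≃ Fin n :=
  Equiv.ofBijective f ((Fintype.bijective_iff_injective_and_card f).2 ⟨hinj, by simp [hcard]⟩)

@[simp] lemma mkE_apply {α : Type*} [Fintype α] [DecidableEq α] {n : ℕ} (f : α → Fin n)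
    (hinj) (hcard) (a : α) : mkE f hinj hcard a = f a := rfl

lemma unit_smul_z2 (u : ℤˣ) (x : ZMod 2) : (u : ℤ) * x = x := by
  rcases Int.units_eq_one_or u with h | h <;> simp [h]

/-- determinant is invariant under arbitrary (possibly different) row and column
reindexings, over `ZMod 2`. -/
lemma det_sub2 {α : Type*} [Fintype α] [DecidableEq α] {n : ℕ}
    (M : Matrix (Fin n) (Fin n) (ZMod 2)) (f g : α ≃ Fin n) :
    (M.submatrix f g).det = M.det := by
  have h : M.submatrix f g = (M.submatrix f f).submatrix id ⇑(g.trans f.symm) := by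
    ext i j; simp
  rw [h, Matrix.det_permute' (g.trans f.symm) (M.submatrix f f)]
  rw [Matrix.det_submatrix_equiv_self]
  exact unit_smul_z2 _ _

/-- row permutation over ZMod 2 -/
lemma det_rowperm2 {α : Type*} [Fintype α] [DecidableEq α]
    (M : Matrix α α (ZMod 2)) (σ : Equiv.Perm α) :
    (M.submatrix σ id).det = M.det := by
  rw [Matrix.det_permute σ M]
  exact unit_smul_z2 _ _


section Recurrences

variable (d : ℕ → ZMod 2) (h1 : ∀ k, d (2*k) = 1) (h2 : ∀ k, d (2*k+1) = 1 + d k)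

include h1 h2 in
lemma Hm_even (m : ℕ) :
    (Hm d (2*m)).det = (Hm d m).det * (Hm d m).det := by
  classical
  set A := Hm d m with hA
  have hinj : Function.Injective (fun x : Fin m ⊕ Fin m =>
      Sum.elim (fun a : Fin m => (⟨2*a.1, by omega⟩ : Fin (2*m)))
        (fun b : Fin m => (⟨2*b.1+1, by omega⟩ : Fin (2*m))) x) := by
    rintro (a | a) (b | b) h <;>
      simp only [Sum.elim_inl, Sum.elim_inr, Fin.mk.injEq] at h
    · exact congrArg Sum.inl (Fin.ext (by omega))
    · exact absurd h (by omega)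
    · exact absurd h (by omega)
    · exact congrArg Sum.inr (Fin.ext (by omega))
  set e : Fin m ⊕ Fin m ≃ Fin (2*m) := mkE _ hinj (by simp; omega) with he
  have hsub : (Hm d (2*m)).submatrix e e
      = fromBlocks (ones _ _) (ones _ _ + A) (ones _ _ + A) (ones _ _) := by
    ext (i | i) (j | j) <;>
      simp only [Matrix.submatrix_apply, he, mkE_apply, Sum.elim_inl, Sum.elim_inr,
        Hm, hA, Matrix.of_apply, fromBlocks_apply₁₁, fromBlocks_apply₁₂,
        fromBlocks_apply₂₁, fromBlocks_apply₂₂, Matrix.add_apply, ones]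
    · have h : 2*i.1 + 2*j.1 = 2*(i.1+j.1) := by ring
      rw [h, h1]
    · have h : 2*i.1 + (2*j.1+1) = 2*(i.1+j.1)+1 := by ring
      rw [h, h2]
    · have h : 2*i.1+1 + 2*j.1 = 2*(i.1+j.1)+1 := by ring
      rw [h, h2]
    · have h : 2*i.1+1 + (2*j.1+1) = 2*(i.1+j.1+1) := by ring
      rw [h, h1]
  have hL : ((fromBlocks 1 0 1 1 : Matrix (Fin m ⊕ Fin m) (Fin m ⊕ Fin m) (ZMod 2))
      * ((Hm d (2*m)).submatrix e e)) * (fromBlocks 1 0 1 1)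
      = fromBlocks A (ones _ _ + A) 0 A := by
    rw [hsub, fromBlocks_multiply, fromBlocks_multiply]
    simp only [Matrix.one_mul, Matrix.zero_mul, Matrix.mul_one, Matrix.mul_zero,
      add_zero, zero_add]
    rw [addJJ, addJJ', addself]
  have hdL : (fromBlocks 1 0 1 1 : Matrix (Fin m ⊕ Fin m) (Fin m ⊕ Fin m) (ZMod 2)).det = 1 := by
    rw [Matrix.det_fromBlocks_zero₁₂]; simp
  have : (Hm d (2*m)).det = ((Hm d (2*m)).submatrix e e).det :=
    (Matrix.det_submatrix_equiv_self e _).symm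
  rw [this, ← Matrix.det_fromBlocks_zero₂₁ A (ones _ _ + A) A, ← hL,
    Matrix.det_mul, Matrix.det_mul, hdL]
  ring

include h1 h2 in
lemma Hm_odd (m : ℕ) :
    (Hm d (2*m+1)).det = (Gm d (m+1)).det * (Gm d (m+1)).det := by
  classical
  set A0 := Hm d m with hA0
  set r : Matrix (Fin 1) (Fin m) (ZMod 2) := Matrix.of fun _ b => d (m + b.1) with hr
  set v : Matrix (Fin m) (Fin 1) (ZMod 2) := Matrix.of fun b _ => d (m + b.1) with hv
  set rr : Matrix (Fin m) (Fin m) (ZMod 2) := Matrix.of fun _ b => d (m + b.1) with hrr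
  set vv : Matrix (Fin m) (Fin m) (ZMod 2) := Matrix.of fun b _ => d (m + b.1) with hvv
  set At : Matrix (Fin 1 ⊕ Fin m) (Fin m) (ZMod 2) := fromRows r A0 with hAt
  -- the parity equiv
  have hinj : Function.Injective (fun x : (Fin 1 ⊕ Fin m) ⊕ Fin m =>
      Sum.elim (Sum.elim (fun _ : Fin 1 => (⟨2*m, by omega⟩ : Fin (2*m+1)))
          (fun k : Fin m => (⟨2*k.1, by omega⟩ : Fin (2*m+1))))
        (fun b : Fin m => (⟨2*b.1+1, by omega⟩ : Fin (2*m+1))) x) := by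
    rintro ((a | a) | a) ((b | b) | b) h <;>
      simp only [Sum.elim_inl, Sum.elim_inr, Fin.mk.injEq] at h <;>
      first
        | (exact absurd h (by omega))
        | (first
            | exact congrArg (Sum.inl ∘ Sum.inl) (Fin.ext (by omega))
            | exact congrArg (Sum.inl ∘ Sum.inr) (Fin.ext (by omega))
            | exact congrArg Sum.inr (Fin.ext (by omega)))
  set e : ((Fin 1 ⊕ Fin m) ⊕ Fin m) ≃ Fin (2*m+1) := mkE _ hinj (by simp; omega) with he
  have hsub : (Hm d (2*m+1)).submatrix e e
      = fromBlocks (ones _ _) (ones _ _ + At) (ones _ _ + Atᵀ) (ones _ _) := by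
    ext ((i | i) | i) ((j | j) | j) <;>
      simp only [Matrix.submatrix_apply, he, mkE_apply, Sum.elim_inl, Sum.elim_inr,
        Hm, hA0, hAt, hr, Matrix.of_apply, fromBlocks_apply₁₁, fromBlocks_apply₁₂,
        fromBlocks_apply₂₁, fromBlocks_apply₂₂, Matrix.add_apply, ones,
        Matrix.transpose_apply, fromRows_apply_inl, fromRows_apply_inr]
    · have h : 2*m + 2*m = 2*(m+m) := by ring
      rw [h, h1]
    · have h : 2*m + 2*j.1 = 2*(m+j.1) := by ring
      rw [h, h1]
    · have h : 2*m + (2*j.1+1) = 2*(m+j.1)+1 := by ring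
      rw [h, h2]
    · have h : 2*i.1 + 2*m = 2*(i.1+m) := by ring
      rw [h, h1]
    · have h : 2*i.1 + 2*j.1 = 2*(i.1+j.1) := by ring
      rw [h, h1]
    · have h : 2*i.1 + (2*j.1+1) = 2*(i.1+j.1)+1 := by ring
      rw [h, h2]
    · have h : 2*i.1+1 + 2*m = 2*(m+i.1)+1 := by ring
      rw [h, h2]
    · have h : 2*i.1+1 + 2*j.1 = 2*(j.1+i.1)+1 := by ring
      rw [h, h2]
    · have h : 2*i.1+1 + (2*j.1+1) = 2*(i.1+j.1+1) := by ring
      rw [h, h1]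
  -- step 1 : clear bottom-left block to Atᵀ
  have hsM : At.submatrix Sum.inr id = A0 := rfl
  have hs1 : sel (Sum.inr : Fin m → Fin 1 ⊕ Fin m) * (ones _ _ + At)
      = ones (Fin m) (Fin m) + A0 := by
    rw [Matrix.mul_add, sel_mul_ones, sel_mul, hsM]
  have hM1 : (fromBlocks 1 0 (sel (Sum.inr : Fin m → Fin 1 ⊕ Fin m)) 1 :
        Matrix ((Fin 1 ⊕ Fin m) ⊕ Fin m) ((Fin 1 ⊕ Fin m) ⊕ Fin m) (ZMod 2))
      * ((Hm d (2*m+1)).submatrix e e)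
      = fromBlocks (ones _ _) (ones _ _ + At) Atᵀ A0 := by
    rw [hsub, fromBlocks_multiply]
    simp only [Matrix.one_mul, Matrix.zero_mul, Matrix.mul_one, Matrix.mul_zero,
      add_zero, zero_add]
    rw [sel_mul_ones, hs1, addJJ, addJJ']
  -- step 2 : clear bottom-right block
  have hT : Atᵀ.submatrix id (Sum.inr : Fin m → Fin 1 ⊕ Fin m) = A0 := by
    ext b k
    simp only [Matrix.submatrix_apply, Matrix.transpose_apply, hAt, fromRows_apply_inr, id,
      hA0, Hm, Matrix.of_apply, Nat.add_comm]
  have hM2 : (fromBlocks (ones _ _) (ones _ _ + At) Atᵀ A0 :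
        Matrix ((Fin 1 ⊕ Fin m) ⊕ Fin m) ((Fin 1 ⊕ Fin m) ⊕ Fin m) (ZMod 2))
      * (fromBlocks 1 (sel (Sum.inr : Fin m → Fin 1 ⊕ Fin m))ᵀ 0 1)
      = fromBlocks (ones _ _) At Atᵀ 0 := by
    rw [fromBlocks_multiply]
    simp only [Matrix.one_mul, Matrix.zero_mul, Matrix.mul_one, Matrix.mul_zero,
      add_zero, zero_add, Matrix.mul_zero]
    rw [ones_mul_selT, mul_selT, hT, addJJ, addself]
  -- step 3 : add the special row to the other even rows
  have honesplit : ones (Fin 1 ⊕ Fin m) (Fin 1 ⊕ Fin m)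
      = fromRows (ones (Fin 1) (Fin 1 ⊕ Fin m)) (ones (Fin m) (Fin 1 ⊕ Fin m)) := by
    ext (i | i) j <;> rfl
  have honemul : ones (Fin m) (Fin 1) * ones (Fin 1) (Fin 1 ⊕ Fin m)
      = ones (Fin m) (Fin 1 ⊕ Fin m) := by
    ext i j; simp [ones, Matrix.mul_apply]
  have hWones : (fromBlocks 1 0 (ones (Fin m) (Fin 1)) 1 :
        Matrix (Fin 1 ⊕ Fin m) (Fin 1 ⊕ Fin m) (ZMod 2)) * ones _ _
      = fromRows (ones (Fin 1) (Fin 1 ⊕ Fin m)) 0 := by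
    rw [honesplit, fromBlocks_mul_fromRows]
    rw [Matrix.one_mul, Matrix.zero_mul, Matrix.one_mul, add_zero, honemul, addself]
  have honemulr : ones (Fin m) (Fin 1) * r = rr := by
    ext i j; simp [ones, hr, hrr, Matrix.mul_apply]
  have hWA : (fromBlocks 1 0 (ones (Fin m) (Fin 1)) 1 :
        Matrix (Fin 1 ⊕ Fin m) (Fin 1 ⊕ Fin m) (ZMod 2)) * At
      = fromRows r (rr + A0) := by
    rw [hAt, fromBlocks_mul_fromRows, Matrix.one_mul, Matrix.zero_mul, add_zero,
      Matrix.one_mul, honemulr]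
  have hM3 : (fromBlocks (fromBlocks 1 0 (ones (Fin m) (Fin 1)) 1) 0 0 1 :
        Matrix ((Fin 1 ⊕ Fin m) ⊕ Fin m) ((Fin 1 ⊕ Fin m) ⊕ Fin m) (ZMod 2))
      * fromBlocks (ones _ _) At Atᵀ 0
      = fromBlocks (fromRows (ones (Fin 1) (Fin 1 ⊕ Fin m)) 0) (fromRows r (rr + A0)) Atᵀ 0 := by
    rw [fromBlocks_multiply]
    simp only [Matrix.one_mul, Matrix.zero_mul, Matrix.mul_one, Matrix.mul_zero,
      add_zero, zero_add]
    rw [hWones, hWA]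
  -- the row swap
  set f : ((Fin 1 ⊕ Fin m) ⊕ Fin m) → ((Fin 1 ⊕ Fin m) ⊕ Fin m) :=
    Sum.elim (Sum.elim (fun t => Sum.inl (Sum.inl t)) Sum.inr) (fun b => Sum.inl (Sum.inr b))
    with hf
  set σ : Equiv.Perm ((Fin 1 ⊕ Fin m) ⊕ Fin m) :=
    ⟨f, f, by rintro ((t | k) | b) <;> rfl, by rintro ((t | k) | b) <;> rfl⟩ with hσ
  set C : Matrix (Fin 1 ⊕ Fin m) (Fin 1 ⊕ Fin m) (ZMod 2) :=
    fromRows (ones (Fin 1) (Fin 1 ⊕ Fin m)) Atᵀ with hC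
  have hN : (fromBlocks (fromRows (ones (Fin 1) (Fin 1 ⊕ Fin m)) 0) (fromRows r (rr + A0)) Atᵀ 0 :
        Matrix ((Fin 1 ⊕ Fin m) ⊕ Fin m) ((Fin 1 ⊕ Fin m) ⊕ Fin m) (ZMod 2)).submatrix σ id
      = fromBlocks C (fromRows r 0) 0 (rr + A0) := by
    ext ((t | k) | b) ((t' | k') | b') <;> rfl
  -- determinants of the auxiliary matrices
  have hdet1 : (fromBlocks 1 0 (sel (Sum.inr : Fin m → Fin 1 ⊕ Fin m)) 1 :
      Matrix ((Fin 1 ⊕ Fin m) ⊕ Fin m) ((Fin 1 ⊕ Fin m) ⊕ Fin m) (ZMod 2)).det = 1 := by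
    rw [Matrix.det_fromBlocks_zero₁₂]; simp
  have hdet2 : (fromBlocks 1 (sel (Sum.inr : Fin m → Fin 1 ⊕ Fin m))ᵀ 0 1 :
      Matrix ((Fin 1 ⊕ Fin m) ⊕ Fin m) ((Fin 1 ⊕ Fin m) ⊕ Fin m) (ZMod 2)).det = 1 := by
    rw [Matrix.det_fromBlocks_zero₂₁]; simp
  have hdetW : (fromBlocks 1 0 (ones (Fin m) (Fin 1)) 1 :
      Matrix (Fin 1 ⊕ Fin m) (Fin 1 ⊕ Fin m) (ZMod 2)).det = 1 := by
    rw [Matrix.det_fromBlocks_zero₁₂]; simp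
  have hdet3 : (fromBlocks (fromBlocks 1 0 (ones (Fin m) (Fin 1)) 1) 0 0 1 :
      Matrix ((Fin 1 ⊕ Fin m) ⊕ Fin m) ((Fin 1 ⊕ Fin m) ⊕ Fin m) (ZMod 2)).det = 1 := by
    rw [Matrix.det_fromBlocks_zero₁₂, hdetW]; simp
  -- det C = det (Gm d (m+1))
  have hinjρ : Function.Injective (fun x : Fin 1 ⊕ Fin m =>
      Sum.elim (fun _ : Fin 1 => (⟨0, by omega⟩ : Fin (m+1)))
        (fun k : Fin m => (⟨k.1+1, by omega⟩ : Fin (m+1))) x) := by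
    rintro (a | a) (b | b) h <;>
      simp only [Sum.elim_inl, Sum.elim_inr, Fin.mk.injEq] at h
    · exact congrArg Sum.inl (Fin.ext (by omega))
    · exact absurd h (by omega)
    · exact absurd h (by omega)
    · exact congrArg Sum.inr (Fin.ext (by omega))
  have hinjγ : Function.Injective (fun x : Fin 1 ⊕ Fin m =>
      Sum.elim (fun _ : Fin 1 => (⟨m, by omega⟩ : Fin (m+1)))
        (fun j : Fin m => (⟨j.1, by omega⟩ : Fin (m+1))) x) := by
    rintro (a | a) (b | b) h <;>
      simp only [Sum.elim_inl, Sum.elim_inr, Fin.mk.injEq] at h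
    · exact congrArg Sum.inl (Fin.ext (by omega))
    · exact absurd h (by omega)
    · exact absurd h (by omega)
    · exact congrArg Sum.inr (Fin.ext (by omega))
  set ρ : (Fin 1 ⊕ Fin m) ≃ Fin (m+1) := mkE _ hinjρ (by simp; omega) with hρ
  set γ : (Fin 1 ⊕ Fin m) ≃ Fin (m+1) := mkE _ hinjγ (by simp; omega) with hγ
  have hCG : C = (Gm d (m+1)).submatrix ρ γ := by
    ext (t | k) (t' | j) <;>
      simp only [hC, fromRows_apply_inl, fromRows_apply_inr, Matrix.transpose_apply,
        hAt, hr, hA0, Hm, Matrix.of_apply, Matrix.submatrix_apply, hρ, hγ, mkE_apply,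
        Sum.elim_inl, Sum.elim_inr, Gm, ones, fromRows_apply_inl] <;>
      simp [Nat.add_comm]
  have hdetC : C.det = (Gm d (m+1)).det := by rw [hCG, det_sub2]
  -- det (rr + A0) = det C
  have hCblocks : C = fromBlocks (ones (Fin 1) (Fin 1)) (ones (Fin 1) (Fin m)) v
      (Matrix.of fun k j : Fin m => d (j.1 + k.1)) := by
    ext (t | k) (t' | j) <;>
      simp [hC, hAt, hv, hr, hA0, Hm, ones, Nat.add_comm]
  have hvones : v * ones (Fin 1) (Fin 1) = v := by
    ext i j; simp [hv, ones, Matrix.mul_apply]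
  have hvonesm : v * ones (Fin 1) (Fin m) = vv := by
    ext i j; simp [hv, hvv, ones, Matrix.mul_apply]
  have hA0symm : (Matrix.of fun k j : Fin m => d (j.1 + k.1)) = A0 := by
    ext k j; simp [hA0, Hm, Nat.add_comm]
  have hL4C : (fromBlocks 1 0 v 1 : Matrix (Fin 1 ⊕ Fin m) (Fin 1 ⊕ Fin m) (ZMod 2)) * C
      = fromBlocks (ones (Fin 1) (Fin 1)) (ones (Fin 1) (Fin m)) 0 (vv + A0) := by
    rw [hCblocks, fromBlocks_multiply]
    simp only [Matrix.one_mul, Matrix.zero_mul, Matrix.mul_one, Matrix.mul_zero,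
      add_zero, zero_add]
    rw [hvones, hvonesm, hA0symm, addself]
  have hdetL4 : (fromBlocks 1 0 v 1 :
      Matrix (Fin 1 ⊕ Fin m) (Fin 1 ⊕ Fin m) (ZMod 2)).det = 1 := by
    rw [Matrix.det_fromBlocks_zero₁₂]; simp
  have hone11 : (ones (Fin 1) (Fin 1)).det = 1 := by
    rw [Matrix.det_fin_one]; rfl
  have hdetCvv : C.det = (vv + A0).det := by
    have := congrArg Matrix.det hL4C
    rw [Matrix.det_mul, hdetL4, one_mul, Matrix.det_fromBlocks_zero₂₁, hone11, one_mul] at this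
    exact this
  have hrrvv : (rr + A0).det = (vv + A0).det := by
    have htr : (rr + A0)ᵀ = vv + A0 := by
      ext i j
      simp [hrr, hvv, hA0, Hm, Nat.add_comm]
    rw [← Matrix.det_transpose (rr + A0), htr]
  -- assemble
  have step0 : (Hm d (2*m+1)).det = ((Hm d (2*m+1)).submatrix e e).det :=
    (Matrix.det_submatrix_equiv_self e _).symm
  have step12 : ((Hm d (2*m+1)).submatrix e e).det
      = (fromBlocks (ones _ _) At Atᵀ 0 :
        Matrix ((Fin 1 ⊕ Fin m) ⊕ Fin m) ((Fin 1 ⊕ Fin m) ⊕ Fin m) (ZMod 2)).det := by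
    rw [← hM2, ← hM1, Matrix.det_mul, Matrix.det_mul, hdet1, hdet2, one_mul, mul_one]
  have step3 : (fromBlocks (ones _ _) At Atᵀ 0 :
        Matrix ((Fin 1 ⊕ Fin m) ⊕ Fin m) ((Fin 1 ⊕ Fin m) ⊕ Fin m) (ZMod 2)).det
      = (fromBlocks (fromRows (ones (Fin 1) (Fin 1 ⊕ Fin m)) 0) (fromRows r (rr + A0)) Atᵀ 0 :
        Matrix ((Fin 1 ⊕ Fin m) ⊕ Fin m) ((Fin 1 ⊕ Fin m) ⊕ Fin m) (ZMod 2)).det := by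
    rw [← hM3, Matrix.det_mul, hdet3, one_mul]
  have step4 : (fromBlocks (fromRows (ones (Fin 1) (Fin 1 ⊕ Fin m)) 0) (fromRows r (rr + A0)) Atᵀ 0 :
        Matrix ((Fin 1 ⊕ Fin m) ⊕ Fin m) ((Fin 1 ⊕ Fin m) ⊕ Fin m) (ZMod 2)).det
      = C.det * (rr + A0).det := by
    rw [← det_rowperm2 _ σ, hN, Matrix.det_fromBlocks_zero₂₁]
  rw [step0, step12, step3, step4, hdetC, hrrvv, ← hdetCvv, hdetC]

-- generic helpers about the row-adding matrix W
lemma W_mul_ones (m : ℕ) (β : Type*) [Fintype β] :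
    (fromBlocks 1 0 (ones (Fin m) (Fin 1)) 1 :
      Matrix (Fin 1 ⊕ Fin m) (Fin 1 ⊕ Fin m) (ZMod 2)) * ones (Fin 1 ⊕ Fin m) β
    = fromRows (ones (Fin 1) β) 0 := by
  have hs : ones (Fin 1 ⊕ Fin m) β = fromRows (ones (Fin 1) β) (ones (Fin m) β) := by
    ext (i | i) j <;> rfl
  have hm : ones (Fin m) (Fin 1) * ones (Fin 1) β = ones (Fin m) β := by
    ext i j; simp [ones, Matrix.mul_apply]
  rw [hs, fromBlocks_mul_fromRows, Matrix.one_mul, Matrix.zero_mul, add_zero,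
    Matrix.one_mul, hm, addself]

lemma W_mul_fromRows0 (m : ℕ) {β : Type*} [Fintype β] (B : Matrix (Fin m) β (ZMod 2)) :
    (fromBlocks 1 0 (ones (Fin m) (Fin 1)) 1 :
      Matrix (Fin 1 ⊕ Fin m) (Fin 1 ⊕ Fin m) (ZMod 2)) * fromRows (0 : Matrix (Fin 1) β (ZMod 2)) B
    = fromRows 0 B := by
  rw [fromBlocks_mul_fromRows, Matrix.one_mul, Matrix.zero_mul, add_zero,
    Matrix.mul_zero, Matrix.one_mul, zero_add]

lemma det_onesHankel (m : ℕ) :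
    (fromRows (ones (Fin 1) (Fin 1 ⊕ Fin m))
      (Matrix.of fun (a : Fin m) (c : Fin 1 ⊕ Fin m) =>
        d (a.1 + Sum.elim (fun _ : Fin 1 => 0) (fun b : Fin m => b.1+1) c))).det
    = (Gm d (m+1)).det := by
  classical
  have hinjρ : Function.Injective (fun x : Fin 1 ⊕ Fin m =>
      Sum.elim (fun _ : Fin 1 => (⟨0, by omega⟩ : Fin (m+1)))
        (fun k : Fin m => (⟨k.1+1, by omega⟩ : Fin (m+1))) x) := by
    rintro (a | a) (b | b) h <;>
      simp only [Sum.elim_inl, Sum.elim_inr, Fin.mk.injEq] at h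
    · exact congrArg Sum.inl (Fin.ext (by omega))
    · exact absurd h (by omega)
    · exact absurd h (by omega)
    · exact congrArg Sum.inr (Fin.ext (by omega))
  set ρ : (Fin 1 ⊕ Fin m) ≃ Fin (m+1) := mkE _ hinjρ (by simp; omega) with hρ
  have hCG : (fromRows (ones (Fin 1) (Fin 1 ⊕ Fin m))
      (Matrix.of fun (a : Fin m) (c : Fin 1 ⊕ Fin m) =>
        d (a.1 + Sum.elim (fun _ : Fin 1 => 0) (fun b : Fin m => b.1+1) c)))
      = (Gm d (m+1)).submatrix ρ ρ := by
    ext (t | k) (t' | j) <;>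
      simp [Gm, hρ, ones, Nat.add_comm]
  rw [hCG, Matrix.det_submatrix_equiv_self]

include h1 h2 in
lemma Gm_odd (m : ℕ) :
    (Gm d (2*m+1)).det = (Hm d m).det * (Gm d (m+1)).det := by
  classical
  set A0 := Hm d m with hA0
  set At2 : Matrix (Fin 1 ⊕ Fin m) (Fin m) (ZMod 2) := fromRows 0 A0 with hAt2
  set Ah : Matrix (Fin m) (Fin 1 ⊕ Fin m) (ZMod 2) :=
    Matrix.of fun (a : Fin m) (c : Fin 1 ⊕ Fin m) =>
      d (a.1 + Sum.elim (fun _ : Fin 1 => 0) (fun b : Fin m => b.1+1) c) with hAh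
  -- row equiv and column equiv
  have hinjr : Function.Injective (fun x : (Fin 1 ⊕ Fin m) ⊕ Fin m =>
      Sum.elim (Sum.elim (fun _ : Fin 1 => (⟨0, by omega⟩ : Fin (2*m+1)))
          (fun k : Fin m => (⟨2*k.1+1, by omega⟩ : Fin (2*m+1))))
        (fun b : Fin m => (⟨2*b.1+2, by omega⟩ : Fin (2*m+1))) x) := by
    rintro ((a | a) | a) ((b | b) | b) h <;>
      simp only [Sum.elim_inl, Sum.elim_inr, Fin.mk.injEq] at h <;>
      first
        | (exact absurd h (by omega))
        | (first
            | exact congrArg (Sum.inl ∘ Sum.inl) (Fin.ext (by omega))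
            | exact congrArg (Sum.inl ∘ Sum.inr) (Fin.ext (by omega))
            | exact congrArg Sum.inr (Fin.ext (by omega)))
  have hinjc : Function.Injective (fun x : (Fin 1 ⊕ Fin m) ⊕ Fin m =>
      Sum.elim (Sum.elim (fun _ : Fin 1 => (⟨0, by omega⟩ : Fin (2*m+1)))
          (fun k : Fin m => (⟨2*k.1+2, by omega⟩ : Fin (2*m+1))))
        (fun b : Fin m => (⟨2*b.1+1, by omega⟩ : Fin (2*m+1))) x) := by
    rintro ((a | a) | a) ((b | b) | b) h <;>
      simp only [Sum.elim_inl, Sum.elim_inr, Fin.mk.injEq] at h <;>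
      first
        | (exact absurd h (by omega))
        | (first
            | exact congrArg (Sum.inl ∘ Sum.inl) (Fin.ext (by omega))
            | exact congrArg (Sum.inl ∘ Sum.inr) (Fin.ext (by omega))
            | exact congrArg Sum.inr (Fin.ext (by omega)))
  set er : ((Fin 1 ⊕ Fin m) ⊕ Fin m) ≃ Fin (2*m+1) := mkE _ hinjr (by simp; omega) with her
  set ec : ((Fin 1 ⊕ Fin m) ⊕ Fin m) ≃ Fin (2*m+1) := mkE _ hinjc (by simp; omega) with hec
  have hsub : (Gm d (2*m+1)).submatrix er ec
      = fromBlocks (ones _ _) (ones _ _ + At2) (ones _ _ + Ah) (ones _ _) := by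
    ext ((i | i) | i) ((j | j) | j) <;>
      simp only [Matrix.submatrix_apply, her, hec, mkE_apply, Sum.elim_inl, Sum.elim_inr,
        Gm, hA0, hAt2, hAh, Hm, Matrix.of_apply, fromBlocks_apply₁₁, fromBlocks_apply₁₂,
        fromBlocks_apply₂₁, fromBlocks_apply₂₂, Matrix.add_apply, ones,
        fromRows_apply_inl, fromRows_apply_inr, Matrix.zero_apply]
    · rfl
    · rfl
    · rfl
    · rw [if_neg (by omega)]
      have h : 2*i.1+1 - 1 + 0 = 2*i.1 := by omega
      rw [h, h1]
    · rw [if_neg (by omega)]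
      have h : 2*i.1+1 - 1 + (2*j.1+2) = 2*(i.1+j.1+1) := by omega
      rw [h, h1]
    · rw [if_neg (by omega)]
      have h : 2*i.1+1 - 1 + (2*j.1+1) = 2*(i.1+j.1)+1 := by omega
      rw [h, h2]
    · rw [if_neg (by omega)]
      have h : 2*i.1+2 - 1 + 0 = 2*i.1+1 := by omega
      rw [h, h2]
      simp [Sum.elim_inl]
    · rw [if_neg (by omega)]
      have h : 2*i.1+2 - 1 + (2*j.1+2) = 2*(i.1+(j.1+1))+1 := by omega
      rw [h, h2]
    · rw [if_neg (by omega)]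
      have h : 2*i.1+2 - 1 + (2*j.1+1) = 2*(i.1+j.1+1) := by omega
      rw [h, h1]
  -- step 1
  have hsM : At2.submatrix Sum.inr id = A0 := rfl
  have hs1 : sel (Sum.inr : Fin m → Fin 1 ⊕ Fin m) * (ones _ _ + At2)
      = ones (Fin m) (Fin m) + A0 := by
    rw [Matrix.mul_add, sel_mul_ones, sel_mul, hsM]
  have hM1 : (fromBlocks 1 0 (sel (Sum.inr : Fin m → Fin 1 ⊕ Fin m)) 1 :
        Matrix ((Fin 1 ⊕ Fin m) ⊕ Fin m) ((Fin 1 ⊕ Fin m) ⊕ Fin m) (ZMod 2))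
      * ((Gm d (2*m+1)).submatrix er ec)
      = fromBlocks (ones _ _) (ones _ _ + At2) Ah A0 := by
    rw [hsub, fromBlocks_multiply]
    simp only [Matrix.one_mul, Matrix.zero_mul, Matrix.mul_one, Matrix.mul_zero,
      add_zero, zero_add]
    rw [sel_mul_ones, hs1, addJJ, addJJ']
  -- step 2 : column selector g
  set g : Fin m → Fin 1 ⊕ Fin m := fun b =>
    if h : b.1 = 0 then Sum.inl 0 else Sum.inr ⟨b.1 - 1, by omega⟩ with hg
  have hAg : Ah.submatrix id g = A0 := by
    ext a b
    simp only [Matrix.submatrix_apply, id, hg]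
    by_cases hb : b.1 = 0
    · rw [dif_pos hb]
      simp only [hAh, Matrix.of_apply, Sum.elim_inl, hA0, Hm]
      congr 1
      omega
    · rw [dif_neg hb]
      simp only [hAh, Matrix.of_apply, Sum.elim_inr, hA0, Hm]
      congr 1
      omega
  have hM2 : (fromBlocks (ones _ _) (ones _ _ + At2) Ah A0 :
        Matrix ((Fin 1 ⊕ Fin m) ⊕ Fin m) ((Fin 1 ⊕ Fin m) ⊕ Fin m) (ZMod 2))
      * (fromBlocks 1 (sel g)ᵀ 0 1)
      = fromBlocks (ones _ _) At2 Ah 0 := by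
    rw [fromBlocks_multiply]
    simp only [Matrix.one_mul, Matrix.zero_mul, Matrix.mul_one, Matrix.mul_zero,
      add_zero, zero_add]
    rw [ones_mul_selT, mul_selT, hAg, addJJ, addself]
  -- step 3
  have hM3 : (fromBlocks (fromBlocks 1 0 (ones (Fin m) (Fin 1)) 1) 0 0 1 :
        Matrix ((Fin 1 ⊕ Fin m) ⊕ Fin m) ((Fin 1 ⊕ Fin m) ⊕ Fin m) (ZMod 2))
      * fromBlocks (ones _ _) At2 Ah 0
      = fromBlocks (fromRows (ones (Fin 1) (Fin 1 ⊕ Fin m)) 0) At2 Ah 0 := by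
    rw [fromBlocks_multiply]
    simp only [Matrix.one_mul, Matrix.zero_mul, Matrix.mul_one, Matrix.mul_zero,
      add_zero, zero_add]
    rw [W_mul_ones, hAt2, W_mul_fromRows0]
  -- swap
  set f : ((Fin 1 ⊕ Fin m) ⊕ Fin m) → ((Fin 1 ⊕ Fin m) ⊕ Fin m) :=
    Sum.elim (Sum.elim (fun t => Sum.inl (Sum.inl t)) Sum.inr) (fun b => Sum.inl (Sum.inr b))
    with hf
  set σ : Equiv.Perm ((Fin 1 ⊕ Fin m) ⊕ Fin m) :=
    ⟨f, f, by rintro ((t | k) | b) <;> rfl, by rintro ((t | k) | b) <;> rfl⟩ with hσ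
  set C : Matrix (Fin 1 ⊕ Fin m) (Fin 1 ⊕ Fin m) (ZMod 2) :=
    fromRows (ones (Fin 1) (Fin 1 ⊕ Fin m)) Ah with hC
  have hN : (fromBlocks (fromRows (ones (Fin 1) (Fin 1 ⊕ Fin m)) 0) At2 Ah 0 :
        Matrix ((Fin 1 ⊕ Fin m) ⊕ Fin m) ((Fin 1 ⊕ Fin m) ⊕ Fin m) (ZMod 2)).submatrix σ id
      = fromBlocks C 0 0 A0 := by
    ext ((t | k) | b) ((t' | k') | b') <;> rfl
  -- determinants
  have hdet1 : (fromBlocks 1 0 (sel (Sum.inr : Fin m → Fin 1 ⊕ Fin m)) 1 :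
      Matrix ((Fin 1 ⊕ Fin m) ⊕ Fin m) ((Fin 1 ⊕ Fin m) ⊕ Fin m) (ZMod 2)).det = 1 := by
    rw [Matrix.det_fromBlocks_zero₁₂]; simp
  have hdet2 : (fromBlocks 1 (sel g)ᵀ 0 1 :
      Matrix ((Fin 1 ⊕ Fin m) ⊕ Fin m) ((Fin 1 ⊕ Fin m) ⊕ Fin m) (ZMod 2)).det = 1 := by
    rw [Matrix.det_fromBlocks_zero₂₁]; simp
  have hdetW : (fromBlocks 1 0 (ones (Fin m) (Fin 1)) 1 :
      Matrix (Fin 1 ⊕ Fin m) (Fin 1 ⊕ Fin m) (ZMod 2)).det = 1 := by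
    rw [Matrix.det_fromBlocks_zero₁₂]; simp
  have hdet3 : (fromBlocks (fromBlocks 1 0 (ones (Fin m) (Fin 1)) 1) 0 0 1 :
      Matrix ((Fin 1 ⊕ Fin m) ⊕ Fin m) ((Fin 1 ⊕ Fin m) ⊕ Fin m) (ZMod 2)).det = 1 := by
    rw [Matrix.det_fromBlocks_zero₁₂, hdetW]; simp
  have hdetC : C.det = (Gm d (m+1)).det := by
    rw [hC, hAh]
    exact det_onesHankel d m
  have step0 : (Gm d (2*m+1)).det = ((Gm d (2*m+1)).submatrix er ec).det :=
    (det_sub2 _ er ec).symm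
  have step12 : ((Gm d (2*m+1)).submatrix er ec).det
      = (fromBlocks (ones _ _) At2 Ah 0 :
        Matrix ((Fin 1 ⊕ Fin m) ⊕ Fin m) ((Fin 1 ⊕ Fin m) ⊕ Fin m) (ZMod 2)).det := by
    rw [← hM2, ← hM1, Matrix.det_mul, Matrix.det_mul, hdet1, hdet2, one_mul, mul_one]
  have step3 : (fromBlocks (ones _ _) At2 Ah 0 :
        Matrix ((Fin 1 ⊕ Fin m) ⊕ Fin m) ((Fin 1 ⊕ Fin m) ⊕ Fin m) (ZMod 2)).det
      = (fromBlocks (fromRows (ones (Fin 1) (Fin 1 ⊕ Fin m)) 0) At2 Ah 0 :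
        Matrix ((Fin 1 ⊕ Fin m) ⊕ Fin m) ((Fin 1 ⊕ Fin m) ⊕ Fin m) (ZMod 2)).det := by
    rw [← hM3, Matrix.det_mul, hdet3, one_mul]
  have step4 : (fromBlocks (fromRows (ones (Fin 1) (Fin 1 ⊕ Fin m)) 0) At2 Ah 0 :
        Matrix ((Fin 1 ⊕ Fin m) ⊕ Fin m) ((Fin 1 ⊕ Fin m) ⊕ Fin m) (ZMod 2)).det
      = C.det * A0.det := by
    rw [← det_rowperm2 _ σ, hN, Matrix.det_fromBlocks_zero₂₁]
  rw [step0, step12, step3, step4, hdetC, hA0, mul_comm]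

include h1 h2 in
lemma Gm_even (m : ℕ) :
    (Gm d (2*m+2)).det = (Gm d (m+1)).det * (Hm d (m+1)).det := by
  classical
  set A1 := Hm d (m+1) with hA1
  set Ah : Matrix (Fin m) (Fin 1 ⊕ Fin m) (ZMod 2) :=
    Matrix.of fun (a : Fin m) (c : Fin 1 ⊕ Fin m) =>
      d (a.1 + Sum.elim (fun _ : Fin 1 => 0) (fun b : Fin m => b.1+1) c) with hAh
  set Ach : Matrix (Fin 1 ⊕ Fin m) (Fin 1 ⊕ Fin m) (ZMod 2) := fromRows 0 Ah with hAch
  have hinj : Function.Injective (fun x : (Fin 1 ⊕ Fin m) ⊕ Fin (m+1) =>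
      Sum.elim (Sum.elim (fun _ : Fin 1 => (⟨0, by omega⟩ : Fin (2*m+2)))
          (fun k : Fin m => (⟨2*k.1+2, by omega⟩ : Fin (2*m+2))))
        (fun b : Fin (m+1) => (⟨2*b.1+1, by omega⟩ : Fin (2*m+2))) x) := by
    rintro ((a | a) | a) ((b | b) | b) h <;>
      simp only [Sum.elim_inl, Sum.elim_inr, Fin.mk.injEq] at h <;>
      first
        | (exact absurd h (by omega))
        | (first
            | exact congrArg (Sum.inl ∘ Sum.inl) (Fin.ext (by omega))
            | exact congrArg (Sum.inl ∘ Sum.inr) (Fin.ext (by omega))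
            | exact congrArg Sum.inr (Fin.ext (by omega)))
  set e : ((Fin 1 ⊕ Fin m) ⊕ Fin (m+1)) ≃ Fin (2*m+2) := mkE _ hinj (by simp; omega) with he
  have hsub : (Gm d (2*m+2)).submatrix e e
      = fromBlocks (ones _ _ + Ach) (ones _ _) (ones _ _) (ones _ _ + A1) := by
    ext ((i | i) | i) ((j | j) | j) <;>
      simp only [Matrix.submatrix_apply, he, mkE_apply, Sum.elim_inl, Sum.elim_inr,
        Gm, hA1, hAch, hAh, Hm, Matrix.of_apply, fromBlocks_apply₁₁, fromBlocks_apply₁₂,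
        fromBlocks_apply₂₁, fromBlocks_apply₂₂, Matrix.add_apply, ones,
        fromRows_apply_inl, fromRows_apply_inr, Matrix.zero_apply]
    · rfl
    · rfl
    · rfl
    · rw [if_neg (by omega)]
      have h : 2*i.1+2 - 1 + 0 = 2*i.1+1 := by omega
      rw [h, h2]
      simp [Sum.elim_inl]
    · rw [if_neg (by omega)]
      have h : 2*i.1+2 - 1 + (2*j.1+2) = 2*(i.1+(j.1+1))+1 := by omega
      rw [h, h2]
    · rw [if_neg (by omega)]
      have h : 2*i.1+2 - 1 + (2*j.1+1) = 2*(i.1+j.1+1) := by omega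
      rw [h, h1]
    · rw [if_neg (by omega)]
      have h : 2*i.1+1 - 1 + 0 = 2*i.1 := by omega
      rw [h, h1]
    · rw [if_neg (by omega)]
      have h : 2*i.1+1 - 1 + (2*j.1+2) = 2*(i.1+j.1+1) := by omega
      rw [h, h1]
    · rw [if_neg (by omega)]
      have h : 2*i.1+1 - 1 + (2*j.1+1) = 2*(i.1+j.1)+1 := by omega
      rw [h, h2]
  -- single step : L * M
  have hWAch : (fromBlocks 1 0 (ones (Fin m) (Fin 1)) 1 :
        Matrix (Fin 1 ⊕ Fin m) (Fin 1 ⊕ Fin m) (ZMod 2)) * (ones _ _ + Ach)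
      = fromRows (ones (Fin 1) (Fin 1 ⊕ Fin m)) 0 + Ach := by
    rw [Matrix.mul_add, W_mul_ones, hAch, W_mul_fromRows0]
  have hsub0 : Ach.submatrix (fun _ : Fin (m+1) => (Sum.inl 0 : Fin 1 ⊕ Fin m)) id = 0 := rfl
  have hUAch : sel (fun _ : Fin (m+1) => (Sum.inl 0 : Fin 1 ⊕ Fin m)) * (ones _ _ + Ach)
      = ones (Fin (m+1)) (Fin 1 ⊕ Fin m) := by
    rw [Matrix.mul_add, sel_mul_ones, sel_mul, hsub0, add_zero]
  have hM1 : (fromBlocks (fromBlocks 1 0 (ones (Fin m) (Fin 1)) 1)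
        0 (sel (fun _ : Fin (m+1) => (Sum.inl 0 : Fin 1 ⊕ Fin m))) 1 :
        Matrix ((Fin 1 ⊕ Fin m) ⊕ Fin (m+1)) ((Fin 1 ⊕ Fin m) ⊕ Fin (m+1)) (ZMod 2))
      * ((Gm d (2*m+2)).submatrix e e)
      = fromBlocks (fromRows (ones (Fin 1) (Fin 1 ⊕ Fin m)) 0 + Ach)
          (fromRows (ones (Fin 1) (Fin (m+1))) 0) 0 A1 := by
    rw [hsub, fromBlocks_multiply]
    simp only [Matrix.one_mul, Matrix.zero_mul, Matrix.mul_one, Matrix.mul_zero,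
      add_zero, zero_add]
    rw [hWAch, W_mul_ones, hUAch, sel_mul_ones, addself, addJJ]
  have hdetL : (fromBlocks (fromBlocks 1 0 (ones (Fin m) (Fin 1)) 1)
        0 (sel (fun _ : Fin (m+1) => (Sum.inl 0 : Fin 1 ⊕ Fin m))) 1 :
        Matrix ((Fin 1 ⊕ Fin m) ⊕ Fin (m+1)) ((Fin 1 ⊕ Fin m) ⊕ Fin (m+1)) (ZMod 2)).det
      = 1 := by
    rw [Matrix.det_fromBlocks_zero₁₂, Matrix.det_fromBlocks_zero₁₂]; simp
  have hCech : fromRows (ones (Fin 1) (Fin 1 ⊕ Fin m)) 0 + Ach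
      = fromRows (ones (Fin 1) (Fin 1 ⊕ Fin m)) Ah := by
    ext (t | k) c <;> simp [hAch, ones]
  have hdetC : (fromRows (ones (Fin 1) (Fin 1 ⊕ Fin m)) Ah).det = (Gm d (m+1)).det := by
    rw [hAh]; exact det_onesHankel d m
  have step0 : (Gm d (2*m+2)).det = ((Gm d (2*m+2)).submatrix e e).det :=
    (Matrix.det_submatrix_equiv_self e _).symm
  have step1 : ((Gm d (2*m+2)).submatrix e e).det
      = (fromBlocks (fromRows (ones (Fin 1) (Fin 1 ⊕ Fin m)) 0 + Ach)
          (fromRows (ones (Fin 1) (Fin (m+1))) 0) 0 A1 :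
        Matrix ((Fin 1 ⊕ Fin m) ⊕ Fin (m+1)) ((Fin 1 ⊕ Fin m) ⊕ Fin (m+1)) (ZMod 2)).det := by
    rw [← hM1, Matrix.det_mul, hdetL, one_mul]
  rw [step0, step1, Matrix.det_fromBlocks_zero₂₁, hCech, hdetC, hA1]

include h1 h2 in
theorem core (n : ℕ) : (Hm d n).det = 1 ∧ (Gm d n).det = 1 := by
  induction n using Nat.strong_induction_on with
  | _ n ih =>
    rcases Nat.eq_zero_or_pos n with rfl | hpos
    · constructor <;> exact Matrix.det_isEmpty
    rcases Nat.even_or_odd n with ⟨m, hm⟩ | ⟨m, hm⟩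
    · have hmpos : 0 < m := by omega
      obtain ⟨m', rfl⟩ : ∃ m', m = m'+1 := ⟨m-1, by omega⟩
      have hm' : n = 2*(m'+1) := by omega
      have hm'' : n = 2*m'+2 := by omega
      have ihm := ih (m'+1) (by omega)
      constructor
      · rw [hm', Hm_even d h1 h2 (m'+1), ihm.1, one_mul]
      · rw [hm'', Gm_even d h1 h2 m', ihm.1, ihm.2, one_mul]
    · have hm' : n = 2*m+1 := by omega
      rcases Nat.eq_zero_or_pos m with rfl | hmpos
      · have hn1 : n = 1 := by omega
        have hG1 : (Gm d 1).det = 1 := by rw [Matrix.det_fin_one]; rfl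
        have hH := Hm_odd d h1 h2 0
        norm_num at hH
        constructor
        · rw [hn1, hH, hG1, one_mul]
        · rw [hn1, hG1]
      · have ihm := ih m (by omega)
        have ihm1 := ih (m+1) (by omega)
        constructor
        · rw [hm', Hm_odd d h1 h2 m, ihm1.2, one_mul]
        · rw [hm', Gm_odd d h1 h2 m, ihm.1, ihm1.2, one_mul]

end Recurrences
end TMA

/-- The Hankel determinant of order `n` of the sequence `c`. -/
def hankel (c : ℕ → ℤ) (n : ℕ) : ℤ :=
  Matrix.det (Matrix.of fun i j : Fin n => c (i.1 + j.1))

/-- The Thue–Morse sequence on `{1, -1}` is Apwenian. -/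
theorem thueMorse_apwenian (e : ℕ → ℤ)
    (h0 : e 0 = 1)
    (heven : ∀ k, e (2 * k) = e k)
    (hodd : ∀ k, e (2 * k + 1) = - e k) :
    ∀ n : ℕ, 0 < n →
      (2 : ℤ) ^ (n - 1) ∣ hankel e n ∧ Odd (hankel e n / 2 ^ (n - 1)) := by
  intro n hn
  obtain ⟨k, rfl⟩ : ∃ k, n = k + 1 := ⟨n - 1, by omega⟩
  simp only [Nat.add_sub_cancel]
  classical
  -- `e` takes values in {1, -1}
  have hpm : ∀ j, e j = 1 ∨ e j = -1 := by
    intro j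
    induction j using Nat.strong_induction_on with
    | _ j ihj =>
      rcases Nat.even_or_odd j with ⟨q, hq⟩ | ⟨q, hq⟩
      · rcases Nat.eq_zero_or_pos q with rfl | hq0
        · have hj0 : j = 0 := by omega
          rw [hj0]; exact Or.inl h0
        · have hjq : j = 2*q := by omega
          rw [hjq, heven]; exact ihj q (by omega)
      · have hjq : j = 2*q+1 := by omega
        rw [hjq, hodd]
        rcases ihj q (by omega) with h | h <;> rw [h] <;> simp
  -- the parity sequence and the period-doubling sequence
  set ε : ℕ → ZMod 2 := fun j => if e j = 1 then 0 else 1 with hε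
  have hεe : ∀ q, ε (2*q) = ε q := fun q => by simp only [hε, heven]
  have hεo : ∀ q, ε (2*q+1) = ε q + 1 := by
    intro q
    rcases hpm q with h | h
    · have hq1 : e (2*q+1) = -1 := by rw [hodd, h]
      simp only [hε, h, hq1]; decide
    · have hq1 : e (2*q+1) = 1 := by rw [hodd, h]; norm_num
      simp only [hε, h, hq1]; decide
  set dd : ℕ → ZMod 2 := fun j => ε (j+1) + ε j with hdd
  have hd1 : ∀ q, dd (2*q) = 1 := by
    intro q
    simp only [hdd]
    rw [hεo q, hεe q]
    generalize ε q = x; revert x; decide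
  have hd2 : ∀ q, dd (2*q+1) = 1 + dd q := by
    intro q
    simp only [hdd]
    have h : 2*q+1+1 = 2*(q+1) := by ring
    rw [h, hεe (q+1), hεo q]
    generalize ε (q+1) = x; generalize ε q = y; revert x y; decide
  obtain ⟨-, hcoreG⟩ := TMA.core dd hd1 hd2 (k+1)
  -- factor the Hankel matrix over ℤ
  set B : Matrix (Fin (k+1)) (Fin (k+1)) ℤ :=
    Matrix.of (fun i j : Fin (k+1) => if i.1 = 0 then e j.1 else (e (i.1+j.1) - e j.1) / 2)
    with hB
  set D : Matrix (Fin (k+1)) (Fin (k+1)) ℤ :=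
    Matrix.diagonal (fun i : Fin (k+1) => if i.1 = 0 then 1 else 2) with hD
  have hdvd2 : ∀ a b : ℕ, (2:ℤ) ∣ (e a - e b) := by
    intro a b
    rcases hpm a with h | h <;> rcases hpm b with h' | h' <;> rw [h, h'] <;> decide
  have hDB : ∀ i j, (D * B) i j = (if i.1 = 0 then e j.1 else e (i.1+j.1) - e j.1) := by
    intro i j
    rw [hD, hB, Matrix.diagonal_mul]
    by_cases hi : i.1 = 0
    · have hi0 : i = 0 := Fin.ext hi
      simp [hi, hi0]
    · simp only [hi, if_false, Matrix.of_apply]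
      exact Int.mul_ediv_cancel' (hdvd2 _ _)
  have hdetA : hankel e (k+1) = (D*B).det := by
    apply Matrix.det_eq_of_forall_row_eq_smul_add_const
      (fun i : Fin (k+1) => if i.1 = 0 then 0 else (1:ℤ)) 0 (by simp)
    intro i j
    rw [hDB, hDB]
    simp only [Matrix.of_apply, Fin.val_zero, if_pos rfl]
    split_ifs with hsp
    · simp [hsp]
    · ring
  have hdetD : D.det = 2^k := by
    rw [hD, Matrix.det_diagonal, Fin.prod_univ_succ]
    simp [Fin.val_succ]
  have key : hankel e (k+1) = 2^k * B.det := by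
    rw [hdetA, Matrix.det_mul, hdetD]
  -- the determinant of B mod 2
  set L : Matrix (Fin (k+1)) (Fin (k+1)) (ZMod 2) :=
    Matrix.of fun i a : Fin (k+1) =>
      if i = 0 then (if a = 0 then 1 else 0)
      else (if 1 ≤ a.1 ∧ a.1 ≤ i.1 then 1 else 0) with hL
  have hdetL : L.det = 1 := by
    have htri : L.BlockTriangular OrderDual.toDual := by
      intro i j hij
      have hji : i.1 < j.1 := hij
      by_cases hi : i = 0
      · have hj : ¬(j = (0 : Fin (k+1))) := by
          intro h
          rw [h] at hji
          simp at hji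
        simp only [hL, Matrix.of_apply]
        rw [if_pos hi, if_neg hj]
      · have hj : ¬(1 ≤ j.1 ∧ j.1 ≤ i.1) := by omega
        simp only [hL, Matrix.of_apply]
        rw [if_neg hi, if_neg hj]
    rw [Matrix.det_of_lowerTriangular L htri]
    apply Finset.prod_eq_one
    intro i _
    by_cases hi : i = 0
    · simp [hL, hi]
    · have hi0 : ¬(i.1 = 0) := by
        intro hc; exact hi (Fin.ext (by simpa using hc))
      have hi' : 1 ≤ i.1 ∧ i.1 ≤ i.1 := by omega
      simp [hL, hi, hi']
  have tele : ∀ (i j : ℕ), (∑ t ∈ Finset.range i, dd (t + j)) = ε (i+j) + ε j := by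
    intro i j
    induction i with
    | zero =>
      rw [Finset.sum_range_zero, Nat.zero_add]
      generalize ε j = x; revert x; decide
    | succ i ihi =>
      rw [Finset.sum_range_succ, ihi]
      simp only [hdd]
      have ha : i + j + 1 = (i+1) + j := by omega
      rw [ha]
      generalize ε ((i+1)+j) = x
      generalize ε (i+j) = y
      generalize ε j = z
      revert x y z; decide
  have hhalf : ∀ a b : ℕ, (((e a - e b)/2 : ℤ) : ZMod 2) = ε a + ε b := by
    intro a b
    simp only [hε]
    rcases hpm a with h | h <;> rcases hpm b with h' | h' <;> rw [h, h'] <;>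
      norm_num <;> decide
  have hcast : ((B.det : ℤ) : ZMod 2) = 1 := by
    have hmap : ((Int.castRingHom (ZMod 2)) B.det)
        = (B.map (Int.castRingHom (ZMod 2))).det := RingHom.map_det _ B
    have hLG : B.map (Int.castRingHom (ZMod 2)) = L * TMA.Gm dd (k+1) := by
      ext i j
      rw [Matrix.map_apply, Matrix.mul_apply]
      by_cases hi : i = 0
      · have hival : i.1 = 0 := by rw [hi]; rfl
        have hrhs : (∑ a : Fin (k+1), L i a * TMA.Gm dd (k+1) a j)
            = TMA.Gm dd (k+1) 0 j := by
          rw [Finset.sum_eq_single (0 : Fin (k+1))]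
          · simp [hL, hi]
          · intro a _ ha
            simp [hL, hi, ha]
          · intro h
            exact absurd (Finset.mem_univ _) h
        rw [hrhs]
        have hG0 : TMA.Gm dd (k+1) 0 j = 1 := by simp [TMA.Gm]
        rw [hG0, hB]
        simp only [Matrix.of_apply]
        rw [if_pos hival]
        rcases hpm j.1 with h | h <;> rw [h] <;> decide
      · -- row i ≥ 1
        have hival : ¬(i.1 = 0) := by
          intro h; exact hi (Fin.ext (by simpa using h))
        have hsummand : ∀ a : Fin (k+1), L i a * TMA.Gm dd (k+1) a j
            = (fun t : ℕ => if 1 ≤ t ∧ t ≤ i.1 then dd (t-1+j.1) else 0) a.1 := by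
          intro a
          simp only [hL, Matrix.of_apply, TMA.Gm]
          rw [if_neg hi]
          by_cases ha : 1 ≤ a.1 ∧ a.1 ≤ i.1
          · have ha0 : ¬(a.1 = 0) := by omega
            rw [if_pos ha, one_mul, if_neg ha0, if_pos ha]
          · rw [if_neg ha, zero_mul, if_neg ha]
        rw [Finset.sum_congr rfl (fun a _ => hsummand a),
          Fin.sum_univ_eq_sum_range (fun t => if 1 ≤ t ∧ t ≤ i.1 then dd (t-1+j.1) else 0) (k+1)]
        have hsum2 : (∑ t ∈ Finset.range (k+1), if 1 ≤ t ∧ t ≤ i.1 then dd (t-1+j.1) else 0)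
            = ∑ t ∈ Finset.range (k+1), (if t ∈ Finset.Ico 1 (i.1+1) then dd (t-1+j.1) else 0) := by
          apply Finset.sum_congr rfl
          intro t _
          have hcond : (1 ≤ t ∧ t ≤ i.1) ↔ (t ∈ Finset.Ico 1 (i.1+1)) := by
            simp only [Finset.mem_Ico]
            omega
          rw [if_congr hcond rfl rfl]
        rw [hsum2, Finset.sum_ite_mem]
        have hinter : Finset.range (k+1) ∩ Finset.Ico 1 (i.1+1) = Finset.Ico 1 (i.1+1) := by
          apply Finset.inter_eq_right.mpr
          intro t ht
          simp only [Finset.mem_Ico] at ht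
          simp only [Finset.mem_range]
          omega
        rw [hinter, Finset.sum_Ico_eq_sum_range]
        simp only [Nat.add_sub_cancel]
        have hre : ∀ t, dd (1 + t - 1 + j.1) = dd (t + j.1) := by
          intro t; congr 1; omega
        rw [Finset.sum_congr rfl (fun t _ => hre t), tele i.1 j.1, hB]
        simp only [Matrix.of_apply]
        rw [if_neg hival]
        exact hhalf _ _
    have : ((Int.castRingHom (ZMod 2)) B.det) = 1 := by
      rw [hmap, hLG, Matrix.det_mul, hdetL, one_mul, hcoreG]
    exact this
  constructor
  · rw [key]
    exact Dvd.intro _ rfl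
  · rw [key, Int.mul_ediv_cancel_left _ (by positivity)]
    rw [← Int.not_even_iff_odd]
    intro hev
    obtain ⟨c, hc⟩ := hev
    rw [hc] at hcast
    push_cast at hcast
    have hzero : (c : ZMod 2) + c = 0 := by
      generalize (c : ZMod 2) = x; revert x; decide
    rw [hzero] at hcast
    exact absurd hcast (by decide)
end

section
/- The sequence f defined from v = (1,−1,−1,1,−1,1,1,1,1,−1,−1) with d = 11 is Apwenian: for every positive integer n, 2^(n−1) divides the Hankel determinant H_n(f) and H_n(f)/2^(n−1) is an odd integer. -/
set_option maxHeartbeats 1000000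

/-- half difference sequence -/
def gg (f : ℕ → ℤ) (k : ℕ) : ℤ := (f (k+1) - f k) / 2

/-- the mod-2 sequence of second differences -/
def sb (f : ℕ → ℤ) (k : ℕ) : ZMod 2 := ((gg f k + gg f (k+1) : ℤ) : ZMod 2)

/-- the reduced integer matrix -/
def NN (f : ℕ → ℤ) (m : ℕ) : Matrix (Fin (m+1)) (Fin (m+1)) ℤ :=
  Matrix.of fun i j => if j.1 = 0 then f i.1 else gg f (i.1 + j.1 - 1)


lemma zmod2_cases (x : ZMod 2) : x = 0 ∨ x = 1 := by revert x; decide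

lemma zmod2_add_self (x : ZMod 2) : x + x = 0 := by revert x; decide

lemma zmod2_mul_self (x : ZMod 2) : x * x = x := by revert x; decide

/-- char-2 diagonal extraction for symmetric double sums -/
lemma sum_sym_diag (F : ℕ → ℕ → ZMod 2) (hF : ∀ i j, F i j = F j i) (t : ℕ) :
    (∑ i ∈ Finset.range t, ∑ j ∈ Finset.range t, F i j) = ∑ i ∈ Finset.range t, F i i := by
  induction t with
  | zero => simp
  | succ t ih =>
    rw [Finset.sum_range_succ, Finset.sum_range_succ (fun i => F i i)]
    simp_rw [Finset.sum_range_succ]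
    rw [Finset.sum_add_distrib, ih]
    have h1 : ∑ i ∈ Finset.range t, F i t = ∑ j ∈ Finset.range t, F t j :=
      Finset.sum_congr rfl (fun i _ => hF i t)
    rw [h1]
    have := zmod2_add_self (∑ j ∈ Finset.range t, F t j)
    linear_combination this

theorem F2det (s : ℕ → ZMod 2) (hs0 : s 0 = 1)
    (hrec : ∀ k, s (2*k+2) = s (2*k+1) + s k) :
    ∀ n, (Matrix.of fun i j : Fin n => s (i.1 + j.1)).det = 1 := by
  intro n
  induction n with
  | zero => simp [Matrix.det_isEmpty]
  | succ n ih =>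
    set A : Matrix (Fin n) (Fin n) (ZMod 2) := Matrix.of fun i j : Fin n => s (i.1 + j.1) with hAdef
    have hu : IsUnit A.det := by rw [ih]; exact isUnit_one
    have hAinv : A⁻¹ * A = 1 := Matrix.nonsing_inv_mul A hu
    have hAinv' : A * A⁻¹ = 1 := Matrix.mul_nonsing_inv A hu
    set b : Fin n → ZMod 2 := fun i => s (i.1 + n) with hbdef
    set c : Fin n → ZMod 2 := A⁻¹.mulVec b with hcdef
    have hc : A.mulVec c = b := by
      rw [hcdef, Matrix.mulVec_mulVec, hAinv', Matrix.one_mulVec]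
    set p : ℕ → ZMod 2 := fun j => if h : j < n then c ⟨j, h⟩ else if j = n then 1 else 0 with hpdef
    have hpn : p n = 1 := by simp [hpdef]
    have horth : ∀ m, m < n → ∑ j ∈ Finset.range (n+1), p j * s (m + j) = 0 := by
      intro m hm
      rw [Finset.sum_range_succ, hpn, one_mul]
      have h1 : ∑ j ∈ Finset.range n, p j * s (m + j) = b ⟨m, hm⟩ := by
        have h2 := congrFun hc ⟨m, hm⟩
        rw [Matrix.mulVec, dotProduct] at h2
        rw [← h2, ← Fin.sum_univ_eq_sum_range (fun j => p j * s (m + j)) n]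
        apply Finset.sum_congr rfl
        intro j _
        have : p j.1 = c j := by
          rw [hpdef]; simp only [j.isLt, dif_pos]
        rw [this, hAdef]
        simp [Matrix.of_apply, mul_comm]
      rw [h1, hbdef]
      exact zmod2_add_self _
    set D : ZMod 2 := ∑ j ∈ Finset.range (n+1), p j * s (n + j) with hDdef
    -- the elementary matrix E
    set E : Matrix (Fin (n+1)) (Fin (n+1)) (ZMod 2) :=
      Matrix.of (fun k j : Fin (n+1) => if j.1 = n then p k.1 else if k = j then 1 else 0) with hEdef
    have hEtri : E.BlockTriangular id := by
      intro i j hij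
      have hj : j.1 < i.1 := hij
      have hjn : j.1 ≠ n := by omega
      have hije : ¬ (i = j) := by intro h; rw [h] at hj; omega
      simp [hEdef, hjn, hije]
    have hEdet : E.det = 1 := by
      rw [Matrix.det_of_upperTriangular hEtri]
      apply Finset.prod_eq_one
      intro k _
      rw [hEdef]
      simp only [Matrix.of_apply]
      by_cases hk : k.1 = n
      · rw [if_pos hk, hk, hpn]
      · simp [hk]
    set B : Matrix (Fin (n+1)) (Fin (n+1)) (ZMod 2) :=
      (Matrix.of fun i j : Fin (n+1) => s (i.1 + j.1)) * E with hBdef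
    have hBlast : ∀ i : Fin (n+1), B i (Fin.last n) =
        ∑ k ∈ Finset.range (n+1), p k * s (i.1 + k) := by
      intro i
      rw [hBdef, Matrix.mul_apply]
      rw [← Fin.sum_univ_eq_sum_range (fun k => p k * s (i.1 + k)) (n+1)]
      apply Finset.sum_congr rfl
      intro k _
      simp [hEdef, Fin.val_last, mul_comm]
    have hBoth : ∀ (i j : Fin (n+1)), j.1 ≠ n → B i j = s (i.1 + j.1) := by
      intro i j hj
      rw [hBdef, Matrix.mul_apply]
      have hterm : ∀ k : Fin (n+1),
          (Matrix.of fun i j : Fin (n+1) => s (i.1 + j.1)) i k * E k j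
            = if k = j then s (i.1 + k.1) else 0 := by
        intro k
        rw [hEdef]
        simp only [Matrix.of_apply, hj, if_false]
        rw [mul_ite, mul_one, mul_zero]
      rw [Finset.sum_congr rfl (fun k _ => hterm k), Finset.sum_ite_eq' Finset.univ j
        (fun k => s (i.1 + k.1))]
      simp
    -- determinant of B via expansion along the last column
    have hsub : B.submatrix (Fin.last n).succAbove (Fin.last n).succAbove = A := by
      ext i' j'
      rw [Matrix.submatrix_apply, Fin.succAbove_last]
      rw [hBoth _ _ (by rw [Fin.coe_castSucc]; omega)]
      simp [hAdef, Fin.coe_castSucc]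
    have hBexp : B.det = D := by
      rw [Matrix.det_succ_column B (Fin.last n)]
      simp only [show (-1 : ZMod 2) = 1 from by decide, one_pow, one_mul]
      rw [Finset.sum_eq_single (Fin.last n)]
      · rw [hBlast (Fin.last n), hsub, ih, mul_one, Fin.val_last, hDdef]
      · intro i _ hine
        have hi : i.1 < n := by
          have h1 : i.1 ≠ n := fun h => hine (Fin.ext (by rw [h, Fin.val_last]))
          omega
        rw [hBlast i, horth i.1 hi, zero_mul]
      · intro h; exact absurd (Finset.mem_univ _) h
    -- now show D = 1
    have hdiag1 : ∑ i ∈ Finset.range (n+1), p i * (∑ j ∈ Finset.range (n+1), p j * s (i + j)) = D := by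
      rw [Finset.sum_range_succ]
      rw [Finset.sum_eq_zero (fun i hi => by
            rw [horth i (Finset.mem_range.mp hi), mul_zero])]
      rw [zero_add, hpn, one_mul, hDdef]
    have hdiag2 : ∑ i ∈ Finset.range (n+1), p i * (∑ j ∈ Finset.range (n+1), p j * s (i + j))
        = ∑ i ∈ Finset.range (n+1), p i * s (2*i) := by
      simp_rw [Finset.mul_sum, ← mul_assoc]
      rw [sum_sym_diag (fun i j => p i * p j * s (i + j))
          (fun i j => by
            show p i * p j * s (i + j) = p j * p i * s (j + i)
            rw [Nat.add_comm i j]; ring) (n+1)]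
      exact Finset.sum_congr rfl (fun i _ => by
        rw [zmod2_mul_self (p i), show i + i = 2*i by ring])
    have hD2 : D = ∑ i ∈ Finset.range (n+1), p i * s (2*i) := by rw [← hdiag1, hdiag2]
    set T : ZMod 2 := ∑ j ∈ Finset.range n, p (j+1) * s j with hTdef
    have hD3 : D = p 0 + ((∑ j ∈ Finset.range n, p (j+1) * s (2*j+1)) + T) := by
      rw [hD2, Finset.sum_range_succ' (fun i => p i * s (2*i)) n]
      have h0 : p 0 * s (2*0) = p 0 := by norm_num [hs0]
      have h1 : ∀ i : ℕ, p (i+1) * s (2*(i+1)) = p (i+1) * s (2*i+1) + p (i+1) * s i := by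
        intro i
        rw [show 2*(i+1) = 2*i+2 by ring, hrec i, mul_add]
      rw [h0, Finset.sum_congr rfl (fun i _ => h1 i), Finset.sum_add_distrib, hTdef]
      ring
    have hG : ∑ l ∈ Finset.range n, p (l+1) * (∑ j ∈ Finset.range (n+1), p j * s (l + j)) = 0 :=
      Finset.sum_eq_zero (fun l hl => by rw [horth l (Finset.mem_range.mp hl), mul_zero])
    have hGexp : ∑ l ∈ Finset.range n, p (l+1) * (∑ j ∈ Finset.range (n+1), p j * s (l + j))
        = (∑ l ∈ Finset.range n, p (l+1) * s (2*l+1)) + p 0 * T := by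
      have h1 : ∀ l : ℕ, p (l+1) * (∑ j ∈ Finset.range (n+1), p j * s (l + j))
          = (∑ j ∈ Finset.range n, p (l+1) * p (j+1) * s (l + j + 1)) + p (l+1) * (p 0 * s l) := by
        intro l
        rw [Finset.sum_range_succ' (fun j => p j * s (l + j)) n, mul_add, Finset.mul_sum]
        congr 1
        exact Finset.sum_congr rfl (fun j _ => by
            rw [show l + (j+1) = l + j + 1 by ring]; ring)
      rw [Finset.sum_congr rfl (fun l _ => h1 l), Finset.sum_add_distrib]
      congr 1
      · rw [sum_sym_diag (fun l j => p (l+1) * p (j+1) * s (l + j + 1))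
            (fun i j => by
              show p (i+1) * p (j+1) * s (i + j + 1) = p (j+1) * p (i+1) * s (j + i + 1)
              rw [Nat.add_comm i j]; ring) n]
        exact Finset.sum_congr rfl (fun l _ => by
          rw [zmod2_mul_self (p (l+1)), show l + l + 1 = 2*l+1 by ring])
      · rw [Finset.mul_sum]
        exact Finset.sum_congr rfl (fun l _ => by ring)
    have hodd : (∑ l ∈ Finset.range n, p (l+1) * s (2*l+1)) = p 0 * T := by
      have h2 := hG
      rw [hGexp] at h2
      have h3 := zmod2_add_self (p 0 * T)
      linear_combination h2 - h3
    have hDfinal : D = p 0 + p 0 * T + T := by rw [hD3, hodd]; ring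
    have hD1 : D = 1 := by
      rcases zmod2_cases (p 0) with hp0 | hp0
      · have hn0 : n ≠ 0 := by
          intro h
          rw [hpdef] at hp0
          simp only [h] at hp0
          norm_num at hp0
        have hTone : T = 1 := by
          rcases zmod2_cases T with hT | hT
          · exfalso
            set q : Fin n → ZMod 2 := fun l => p (l.1 + 1) with hqdef
            have hq : A.mulVec q = 0 := by
              funext i
              rw [Matrix.mulVec, dotProduct]
              have hterm : ∀ l : Fin n, A i l * q l = p (l.1+1) * s (i.1 + l.1) := by
                intro l
                rw [hAdef, hqdef]
                simp only [Matrix.of_apply]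
                ring
              have hsum : ∑ l : Fin n, p (l.1+1) * s (i.1 + l.1)
                  = ∑ t ∈ Finset.range n, p (t+1) * s (i.1 + t) :=
                Fin.sum_univ_eq_sum_range (fun t => p (t+1) * s (i.1 + t)) n
              rw [Finset.sum_congr rfl (fun l _ => hterm l), hsum]
              show ∑ t ∈ Finset.range n, p (t+1) * s (i.1 + t) = 0
              rcases Nat.eq_zero_or_pos i.1 with hi0 | hipos
              · rw [Finset.sum_congr rfl (fun t (_ : t ∈ Finset.range n) => by
                  rw [hi0, Nat.zero_add])]
                rw [← hTdef]
                exact hT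
              · have horthm := horth (i.1 - 1) (by omega)
                rw [Finset.sum_range_succ' (fun j => p j * s (i.1 - 1 + j)) n] at horthm
                rw [hp0, zero_mul, add_zero] at horthm
                rw [Finset.sum_congr rfl (fun t (_ : t ∈ Finset.range n) => by
                  rw [show i.1 + t = i.1 - 1 + (t+1) from by omega])]
                exact horthm
            have hq0 : q = 0 := by
              have h3 := congrArg (A⁻¹.mulVec) hq
              rwa [Matrix.mulVec_mulVec, hAinv, Matrix.one_mulVec, Matrix.mulVec_zero] at h3
            have h4 := congrFun hq0 ⟨n-1, by omega⟩
            rw [hqdef] at h4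
            simp only at h4
            rw [show n - 1 + 1 = n from by omega, hpn] at h4
            exact one_ne_zero h4
          · exact hT
        rw [hDfinal, hp0, hTone]
        norm_num
      · rw [hDfinal, hp0, one_mul]
        have h3 := zmod2_add_self T
        linear_combination h3
    have hfin : B.det = (Matrix.of fun i j : Fin (n+1) => s (i.1+j.1)).det * E.det := by
      rw [hBdef, Matrix.det_mul]
    rw [hEdet, mul_one] at hfin
    rw [← hfin, hBexp, hD1]

lemma key4 (a b c p q r t : ℤ)
    (ha : a = 1 ∨ a = -1) (hb : b = 1 ∨ b = -1) (hc : c = 1 ∨ c = -1)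
    (hp : p = 1 ∨ p = -1) (hq : q = 1 ∨ q = -1) (hr : r = 1 ∨ r = -1)
    (ht : t = 1 ∨ t = -1)
    (h1 : p * q * a * b = -1) (h2 : r * t * b * c = -1) :
    (4 : ℤ) ∣ (t - r - q + p - c + a) := by
  rcases ha with rfl|rfl <;> rcases hb with rfl|rfl <;> rcases hc with rfl|rfl <;>
    rcases hp with rfl|rfl <;> rcases hq with rfl|rfl <;> rcases hr with rfl|rfl <;>
    rcases ht with rfl|rfl <;> omega

/-- The sequence `f` associated with `v = ![1, -1, -1, 1, -1, 1, 1, 1, 1, -1, -1]` (d = 11) is Apwenian. -/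
theorem F11_apwenian (f : ℕ → ℤ)
    (h0 : f 0 = 1)
    (hf : ∀ n : ℕ, ∀ i : Fin 11, f (11 * n + (i : ℕ)) = ![1, -1, -1, 1, -1, 1, 1, 1, 1, -1, -1] i * f n) :
    ∀ n : ℕ, 0 < n →
      (2 : ℤ) ^ (n - 1) ∣ hankel f n ∧ Odd (hankel f n / 2 ^ (n - 1)) := by
  have hv0 : ∀ t, f (11*t) = f t := by
    intro t
    have h := hf t 0
    rw [show ((0:Fin 11):ℕ) = 0 from rfl, Nat.add_zero,
      show (![1, -1, -1, 1, -1, 1, 1, 1, 1, -1, -1] : Fin 11 → ℤ) 0 = 1 from rfl, one_mul] at h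
    exact h
  have hv1 : ∀ t, f (11*t + 1) = -f t := by
    intro t
    have h := hf t 1
    rw [show ((1:Fin 11):ℕ) = 1 from rfl,
      show (![1, -1, -1, 1, -1, 1, 1, 1, 1, -1, -1] : Fin 11 → ℤ) 1 = -1 from rfl, neg_one_mul] at h
    exact h
  have hv2 : ∀ t, f (11*t + 2) = -f t := by
    intro t
    have h := hf t 2
    rw [show ((2:Fin 11):ℕ) = 2 from rfl,
      show (![1, -1, -1, 1, -1, 1, 1, 1, 1, -1, -1] : Fin 11 → ℤ) 2 = -1 from rfl, neg_one_mul] at h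
    exact h
  have hv3 : ∀ t, f (11*t + 3) = f t := by
    intro t
    have h := hf t 3
    rw [show ((3:Fin 11):ℕ) = 3 from rfl,
      show (![1, -1, -1, 1, -1, 1, 1, 1, 1, -1, -1] : Fin 11 → ℤ) 3 = 1 from rfl, one_mul] at h
    exact h
  have hv4 : ∀ t, f (11*t + 4) = -f t := by
    intro t
    have h := hf t 4
    rw [show ((4:Fin 11):ℕ) = 4 from rfl,
      show (![1, -1, -1, 1, -1, 1, 1, 1, 1, -1, -1] : Fin 11 → ℤ) 4 = -1 from rfl, neg_one_mul] at h
    exact h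
  have hv5 : ∀ t, f (11*t + 5) = f t := by
    intro t
    have h := hf t 5
    rw [show ((5:Fin 11):ℕ) = 5 from rfl,
      show (![1, -1, -1, 1, -1, 1, 1, 1, 1, -1, -1] : Fin 11 → ℤ) 5 = 1 from rfl, one_mul] at h
    exact h
  have hv6 : ∀ t, f (11*t + 6) = f t := by
    intro t
    have h := hf t 6
    rw [show ((6:Fin 11):ℕ) = 6 from rfl,
      show (![1, -1, -1, 1, -1, 1, 1, 1, 1, -1, -1] : Fin 11 → ℤ) 6 = 1 from rfl, one_mul] at h
    exact h
  have hv7 : ∀ t, f (11*t + 7) = f t := by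
    intro t
    have h := hf t 7
    rw [show ((7:Fin 11):ℕ) = 7 from rfl,
      show (![1, -1, -1, 1, -1, 1, 1, 1, 1, -1, -1] : Fin 11 → ℤ) 7 = 1 from rfl, one_mul] at h
    exact h
  have hv8 : ∀ t, f (11*t + 8) = f t := by
    intro t
    have h := hf t 8
    rw [show ((8:Fin 11):ℕ) = 8 from rfl,
      show (![1, -1, -1, 1, -1, 1, 1, 1, 1, -1, -1] : Fin 11 → ℤ) 8 = 1 from rfl, one_mul] at h
    exact h
  have hv9 : ∀ t, f (11*t + 9) = -f t := by
    intro t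
    have h := hf t 9
    rw [show ((9:Fin 11):ℕ) = 9 from rfl,
      show (![1, -1, -1, 1, -1, 1, 1, 1, 1, -1, -1] : Fin 11 → ℤ) 9 = -1 from rfl, neg_one_mul] at h
    exact h
  have hv10 : ∀ t, f (11*t + 10) = -f t := by
    intro t
    have h := hf t 10
    rw [show ((10:Fin 11):ℕ) = 10 from rfl,
      show (![1, -1, -1, 1, -1, 1, 1, 1, 1, -1, -1] : Fin 11 → ℤ) 10 = -1 from rfl, neg_one_mul] at h
    exact h
  have hpm : ∀ k, f k = 1 ∨ f k = -1 := by
    intro k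
    induction k using Nat.strongRecOn with
    | ind k ih =>
      rcases Nat.eq_zero_or_pos k with hk0 | hkpos
      · rw [hk0, h0]; left; rfl
      · have hdm := Nat.div_add_mod k 11
        have hlt : k / 11 < k := Nat.div_lt_self hkpos (by norm_num)
        have hq := ih (k/11) hlt
        have hr : k % 11 = 0 ∨ k % 11 = 1 ∨ k % 11 = 2 ∨ k % 11 = 3 ∨ k % 11 = 4 ∨
            k % 11 = 5 ∨ k % 11 = 6 ∨ k % 11 = 7 ∨ k % 11 = 8 ∨ k % 11 = 9 ∨ k % 11 = 10 := by
          omega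
        rcases hr with hr|hr|hr|hr|hr|hr|hr|hr|hr|hr|hr
        · rw [show k = 11*(k/11) from by omega, hv0 (k/11)]
          exact hq
        · rw [show k = 11*(k/11) + 1 from by omega, hv1 (k/11)]
          rcases hq with h|h <;> rw [h] <;> norm_num
        · rw [show k = 11*(k/11) + 2 from by omega, hv2 (k/11)]
          rcases hq with h|h <;> rw [h] <;> norm_num
        · rw [show k = 11*(k/11) + 3 from by omega, hv3 (k/11)]
          exact hq
        · rw [show k = 11*(k/11) + 4 from by omega, hv4 (k/11)]
          rcases hq with h|h <;> rw [h] <;> norm_num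
        · rw [show k = 11*(k/11) + 5 from by omega, hv5 (k/11)]
          exact hq
        · rw [show k = 11*(k/11) + 6 from by omega, hv6 (k/11)]
          exact hq
        · rw [show k = 11*(k/11) + 7 from by omega, hv7 (k/11)]
          exact hq
        · rw [show k = 11*(k/11) + 8 from by omega, hv8 (k/11)]
          exact hq
        · rw [show k = 11*(k/11) + 9 from by omega, hv9 (k/11)]
          rcases hq with h|h <;> rw [h] <;> norm_num
        · rw [show k = 11*(k/11) + 10 from by omega, hv10 (k/11)]
          rcases hq with h|h <;> rw [h] <;> norm_num
  have hB : ∀ k, f (2*k+1) * f (2*k+2) * f k * f (k+1) = -1 := by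
    intro k
    induction k using Nat.strongRecOn with
    | ind k ih =>
      have hdm := Nat.div_add_mod k 11
      set m := k / 11 with hm
      have hr : k % 11 = 0 ∨ k % 11 = 1 ∨ k % 11 = 2 ∨ k % 11 = 3 ∨ k % 11 = 4 ∨
          k % 11 = 5 ∨ k % 11 = 6 ∨ k % 11 = 7 ∨ k % 11 = 8 ∨ k % 11 = 9 ∨ k % 11 = 10 := by
        omega
      rcases hr with hr|hr|hr|hr|hr|hr|hr|hr|hr|hr|hr
      · rw [show 2*k+1 = 11*(2*m) + 1 from by omega, hv1 (2*m),
          show 2*k+2 = 11*(2*m) + 2 from by omega, hv2 (2*m),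
          show k+1 = 11*m + 1 from by omega, hv1 m,
          show k = 11*m from by omega, hv0 m]
        rcases hpm (2*m) with h|h <;> rcases hpm m with h2|h2 <;> rw [h, h2] <;> norm_num
      · rw [show 2*k+1 = 11*(2*m) + 3 from by omega, hv3 (2*m),
          show 2*k+2 = 11*(2*m) + 4 from by omega, hv4 (2*m),
          show k+1 = 11*m + 2 from by omega, hv2 m,
          show k = 11*m + 1 from by omega, hv1 m]
        rcases hpm (2*m) with h|h <;> rcases hpm m with h2|h2 <;> rw [h, h2] <;> norm_num
      · rw [show 2*k+1 = 11*(2*m) + 5 from by omega, hv5 (2*m),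
          show 2*k+2 = 11*(2*m) + 6 from by omega, hv6 (2*m),
          show k+1 = 11*m + 3 from by omega, hv3 m,
          show k = 11*m + 2 from by omega, hv2 m]
        rcases hpm (2*m) with h|h <;> rcases hpm m with h2|h2 <;> rw [h, h2] <;> norm_num
      · rw [show 2*k+1 = 11*(2*m) + 7 from by omega, hv7 (2*m),
          show 2*k+2 = 11*(2*m) + 8 from by omega, hv8 (2*m),
          show k+1 = 11*m + 4 from by omega, hv4 m,
          show k = 11*m + 3 from by omega, hv3 m]
        rcases hpm (2*m) with h|h <;> rcases hpm m with h2|h2 <;> rw [h, h2] <;> norm_num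
      · rw [show 2*k+1 = 11*(2*m) + 9 from by omega, hv9 (2*m),
          show 2*k+2 = 11*(2*m) + 10 from by omega, hv10 (2*m),
          show k+1 = 11*m + 5 from by omega, hv5 m,
          show k = 11*m + 4 from by omega, hv4 m]
        rcases hpm (2*m) with h|h <;> rcases hpm m with h2|h2 <;> rw [h, h2] <;> norm_num
      · rw [show 2*k+1 = 11*(2*m+1) from by omega, hv0 (2*m+1),
          show 2*k+2 = 11*(2*m+1) + 1 from by omega, hv1 (2*m+1),
          show k+1 = 11*m + 6 from by omega, hv6 m,
          show k = 11*m + 5 from by omega, hv5 m]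
        rcases hpm (2*m+1) with h|h <;> rcases hpm m with h2|h2 <;> rw [h, h2] <;> norm_num
      · rw [show 2*k+1 = 11*(2*m+1) + 2 from by omega, hv2 (2*m+1),
          show 2*k+2 = 11*(2*m+1) + 3 from by omega, hv3 (2*m+1),
          show k+1 = 11*m + 7 from by omega, hv7 m,
          show k = 11*m + 6 from by omega, hv6 m]
        rcases hpm (2*m+1) with h|h <;> rcases hpm m with h2|h2 <;> rw [h, h2] <;> norm_num
      · rw [show 2*k+1 = 11*(2*m+1) + 4 from by omega, hv4 (2*m+1),
          show 2*k+2 = 11*(2*m+1) + 5 from by omega, hv5 (2*m+1),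
          show k+1 = 11*m + 8 from by omega, hv8 m,
          show k = 11*m + 7 from by omega, hv7 m]
        rcases hpm (2*m+1) with h|h <;> rcases hpm m with h2|h2 <;> rw [h, h2] <;> norm_num
      · rw [show 2*k+1 = 11*(2*m+1) + 6 from by omega, hv6 (2*m+1),
          show 2*k+2 = 11*(2*m+1) + 7 from by omega, hv7 (2*m+1),
          show k+1 = 11*m + 9 from by omega, hv9 m,
          show k = 11*m + 8 from by omega, hv8 m]
        rcases hpm (2*m+1) with h|h <;> rcases hpm m with h2|h2 <;> rw [h, h2] <;> norm_num
      · rw [show 2*k+1 = 11*(2*m+1) + 8 from by omega, hv8 (2*m+1),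
          show 2*k+2 = 11*(2*m+1) + 9 from by omega, hv9 (2*m+1),
          show k+1 = 11*m + 10 from by omega, hv10 m,
          show k = 11*m + 9 from by omega, hv9 m]
        rcases hpm (2*m+1) with h|h <;> rcases hpm m with h2|h2 <;> rw [h, h2] <;> norm_num
      · have ihm := ih m (by omega)
        rw [show 2*k+1 = 11*(2*m+1) + 10 from by omega, hv10 (2*m+1),
          show 2*k+2 = 11*(2*m+2) from by omega, hv0 (2*m+2),
          show k+1 = 11*(m+1) from by omega, hv0 (m+1),
          show k = 11*m + 10 from by omega, hv10 m]
        linear_combination ihm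
  have hgs : ∀ k, 2 * gg f k = f (k+1) - f k := by
    intro k
    show 2 * ((f (k+1) - f k) / 2) = f (k+1) - f k
    rcases hpm k with h|h <;> rcases hpm (k+1) with h'|h' <;> rw [h, h'] <;> decide
  have hs0 : sb f 0 = 1 := by
    have hf1 : f 1 = -f 0 := by have := hv1 0; norm_num at this; exact this
    have hf2v : f 2 = -f 0 := by have := hv2 0; norm_num at this; exact this
    show ((gg f 0 + gg f 1 : ℤ) : ZMod 2) = 1
    have e0 : gg f 0 = -1 := by show (f 1 - f 0)/2 = -1; rw [hf1, h0]; decide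
    have e1 : gg f 1 = 0 := by show (f 2 - f 1)/2 = 0; rw [hf2v, hf1, h0]; decide
    rw [e0, e1]
    decide
  have hrecs : ∀ k, sb f (2*k+2) = sb f (2*k+1) + sb f k := by
    intro k
    have h1 := hB k
    have h2 := hB (k+1)
    rw [show 2*(k+1)+1 = 2*k+3 from by omega, show 2*(k+1)+2 = 2*k+4 from by omega] at h2
    have h4 : (4:ℤ) ∣ (f (2*k+4) - f (2*k+3) - f (2*k+2) + f (2*k+1) - f (k+2) + f k) :=
      key4 (f k) (f (k+1)) (f (k+2)) (f (2*k+1)) (f (2*k+2)) (f (2*k+3)) (f (2*k+4))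
        (hpm k) (hpm (k+1)) (hpm (k+2)) (hpm _) (hpm _) (hpm _) (hpm _) h1 h2
    have hg1 := hgs (2*k+1)
    rw [show 2*k+1+1 = 2*k+2 from by omega] at hg1
    have hg2 := hgs (2*k+2)
    rw [show 2*k+2+1 = 2*k+3 from by omega] at hg2
    have hg3 := hgs (2*k+3)
    rw [show 2*k+3+1 = 2*k+4 from by omega] at hg3
    have hg4 := hgs k
    have hg5 := hgs (k+1)
    rw [show k+1+1 = k+2 from by omega] at hg5
    have h2d : (2:ℤ) ∣ ((gg f (2*k+2) + gg f (2*k+3)) -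
        ((gg f (2*k+1) + gg f (2*k+2)) + (gg f k + gg f (k+1)))) := by
      omega
    show ((gg f (2*k+2) + gg f (2*k+3) : ℤ) : ZMod 2)
        = ((gg f (2*k+1) + gg f (2*k+2) : ℤ) : ZMod 2) + ((gg f k + gg f (k+1) : ℤ) : ZMod 2)
    have hz := (ZMod.intCast_zmod_eq_zero_iff_dvd _ 2).mpr h2d
    push_cast at hz ⊢
    linear_combination hz
  have tele : ∀ a r, f a + ∑ t ∈ Finset.range r, 2 * gg f (a+t) = f (a+r) := by
    intro a r
    induction r with
    | zero => simp
    | succ r ih =>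
      rw [Finset.sum_range_succ, show a + (r+1) = (a+r)+1 from by omega]
      have h2 := hgs (a+r)
      omega
  intro n hn
  obtain ⟨m, rfl⟩ : ∃ m, n = m + 1 := ⟨n-1, by omega⟩
  simp only [Nat.add_sub_cancel]
  set U : Matrix (Fin (m+1)) (Fin (m+1)) ℤ :=
    Matrix.of (fun k j : Fin (m+1) => if k.1 = 0 then 1 else if k.1 ≤ j.1 then 2 else 0) with hUdef
  have hMNU : (Matrix.of fun i j : Fin (m+1) => f (i.1 + j.1)) = NN f m * U := by
    ext i j
    rw [Matrix.mul_apply, Fin.sum_univ_succ]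
    have h00 : NN f m i 0 * U 0 j = f i.1 := by
      simp [NN, hUdef]
    have hsucc : ∀ k : Fin m, NN f m i k.succ * U k.succ j
        = if k.1 + 1 ≤ j.1 then 2 * gg f (i.1 + k.1) else 0 := by
      intro k
      have hks : ((k.succ : Fin (m+1)) : ℕ) = k.1 + 1 := rfl
      show (if (k.succ : Fin (m+1)).1 = 0 then f i.1 else gg f (i.1 + (k.succ : Fin (m+1)).1 - 1)) *
        (if (k.succ : Fin (m+1)).1 = 0 then 1 else if (k.succ : Fin (m+1)).1 ≤ j.1 then 2 else 0)
        = if k.1 + 1 ≤ j.1 then 2 * gg f (i.1 + k.1) else 0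
      rw [hks]
      simp only [Nat.succ_ne_zero, if_false]
      rw [show i.1 + (k.1+1) - 1 = i.1 + k.1 from by omega]
      split <;> ring
    rw [h00, Finset.sum_congr rfl (fun k _ => hsucc k)]
    have hconv : ∑ k : Fin m, (if k.1 + 1 ≤ j.1 then 2 * gg f (i.1 + k.1) else 0)
        = ∑ t ∈ Finset.range m, (if t + 1 ≤ j.1 then 2 * gg f (i.1 + t) else 0) :=
      Fin.sum_univ_eq_sum_range (fun t => if t + 1 ≤ j.1 then 2 * gg f (i.1 + t) else 0) m
    rw [hconv]
    have hsubs : ∑ t ∈ Finset.range m, (if t + 1 ≤ j.1 then 2 * gg f (i.1 + t) else 0)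
        = ∑ t ∈ Finset.range j.1, 2 * gg f (i.1 + t) := by
      rw [← Finset.sum_subset (Finset.range_subset_range.mpr (by omega : j.1 ≤ m))
        (fun x _ hx => if_neg (by simp only [Finset.mem_range] at hx ⊢; omega))]
      exact Finset.sum_congr rfl (fun t ht => if_pos (by
        simp only [Finset.mem_range] at ht; omega))
    rw [hsubs]
    exact (tele i.1 j.1).symm
  have hUtri : U.BlockTriangular id := by
    intro i j hij
    have h1 : (j:ℕ) < (i:ℕ) := hij
    have hi0 : (i:ℕ) ≠ 0 := by omega
    show (if (i:ℕ) = 0 then (1:ℤ) else if (i:ℕ) ≤ (j:ℕ) then 2 else 0) = 0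
    rw [if_neg hi0, if_neg (by omega)]
  have hUdet : U.det = 2^m := by
    rw [Matrix.det_of_upperTriangular hUtri, Fin.prod_univ_succ]
    have h1 : U 0 0 = 1 := by simp [hUdef]
    have h2 : ∀ k : Fin m, U k.succ k.succ = 2 := by
      intro k
      have hks : ((k.succ : Fin (m+1)) : ℕ) = k.1 + 1 := rfl
      simp [hUdef, hks]
    rw [h1, Finset.prod_congr rfl (fun k _ => h2 k), one_mul, Finset.prod_const]
    simp
  have hfac : hankel f (m+1) = (NN f m).det * 2^m := by
    unfold hankel
    rw [hMNU, Matrix.det_mul, hUdet]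
  have hf2 : ∀ k, ((f k : ℤ) : ZMod 2) = 1 := by
    intro k; rcases hpm k with h|h <;> rw [h] <;> decide
  have hdet2 : (((NN f m).det : ℤ) : ZMod 2) = 1 := by
    have hmap : (((NN f m).det : ℤ) : ZMod 2) = ((NN f m).map (Int.cast : ℤ → ZMod 2)).det := by
      have h := RingHom.map_det (Int.castRingHom (ZMod 2)) (NN f m)
      simpa using h
    rw [hmap]
    set Nt : Matrix (Fin (m+1)) (Fin (m+1)) (ZMod 2) := (NN f m).map (Int.cast : ℤ → ZMod 2) with hNt
    set L : Matrix (Fin (m+1)) (Fin (m+1)) (ZMod 2) :=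
      Matrix.of (fun i k : Fin (m+1) => (if i = k then 1 else 0) + (if k.1 = i.1 + 1 then 1 else 0)) with hLdef
    have hLtri : L.BlockTriangular id := by
      intro i j hij
      have h1 : (j:ℕ) < (i:ℕ) := hij
      have h2 : ¬ (i = j) := by intro h; rw [h] at h1; omega
      have h3 : ¬ ((j:ℕ) = (i:ℕ) + 1) := by omega
      show (if i = j then (1:ZMod 2) else 0) + (if (j:ℕ) = (i:ℕ) + 1 then 1 else 0) = 0
      rw [if_neg h2, if_neg h3, add_zero]
    have hLdet : L.det = 1 := by
      rw [Matrix.det_of_upperTriangular hLtri]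
      apply Finset.prod_eq_one
      intro k _
      simp [hLdef]
    have hPdef : ∀ i j, (L * Nt) i j
        = Nt i j + (∑ k : Fin (m+1), if k.1 = i.1+1 then Nt k j else 0) := by
      intro i j
      rw [Matrix.mul_apply]
      have hterm : ∀ k : Fin (m+1), L i k * Nt k j
          = (if i = k then Nt k j else 0) + (if k.1 = i.1+1 then Nt k j else 0) := by
        intro k
        show ((if i = k then (1:ZMod 2) else 0) + (if k.1 = i.1 + 1 then 1 else 0)) * Nt k j = _
        split <;> split <;> ring
      rw [Finset.sum_congr rfl (fun k _ => hterm k), Finset.sum_add_distrib,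
        Finset.sum_ite_eq Finset.univ i (fun k => Nt k j)]
      simp
    have hPup : ∀ (i j : Fin (m+1)) (hi : i.1 < m),
        (L * Nt) i j = Nt i j + Nt ⟨i.1+1, by omega⟩ j := by
      intro i j hi
      rw [hPdef i j]
      congr 1
      rw [Finset.sum_eq_single (⟨i.1+1, by omega⟩ : Fin (m+1))]
      · rw [if_pos rfl]
      · intro k _ hk
        exact if_neg (fun h => hk (Fin.ext h))
      · intro h; exact absurd (Finset.mem_univ _) h
    have hPlast : ∀ j, (L * Nt) (Fin.last m) j = Nt (Fin.last m) j := by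
      intro j
      rw [hPdef]
      rw [Finset.sum_eq_zero (fun k _ => if_neg (by
        have := k.isLt
        rw [Fin.val_last]
        omega))]
      rw [add_zero]
    have hNt0 : ∀ i : Fin (m+1), Nt i 0 = 1 := by
      intro i
      rw [hNt, Matrix.map_apply]
      rw [show NN f m i 0 = f i.1 from by simp [NN]]
      exact hf2 i.1
    have hNtj : ∀ (i j : Fin (m+1)), j.1 ≠ 0 →
        Nt i j = ((gg f (i.1 + j.1 - 1) : ℤ) : ZMod 2) := by
      intro i j hj
      rw [hNt, Matrix.map_apply]
      rw [show NN f m i j = gg f (i.1 + j.1 - 1) from by simp [NN, hj, show j ≠ 0 from fun h => hj (by rw [h]; rfl)]]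
    have hP0 : ∀ i : Fin (m+1), (L * Nt) i 0 = if i.1 = m then 1 else 0 := by
      intro i
      rcases Nat.lt_or_ge i.1 m with hi | hi
      · rw [hPup i 0 hi, hNt0, hNt0, if_neg (by omega)]
        exact zmod2_add_self 1
      · have hieq : i = Fin.last m := Fin.ext (by
          rw [Fin.val_last]
          have := i.isLt
          omega)
        rw [hieq, hPlast, hNt0, if_pos (Fin.val_last m)]
    have hLN : (L * Nt).det = Nt.det := by rw [Matrix.det_mul, hLdet, one_mul]
    have hexp : (L * Nt).det = (Matrix.of fun i j : Fin m => sb f (i.1 + j.1)).det := by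
      rw [Matrix.det_succ_column_zero]
      rw [Finset.sum_eq_single (Fin.last m)]
      · rw [hP0 (Fin.last m), Fin.val_last, if_pos rfl]
        simp only [show (-1 : ZMod 2) = 1 from by decide, one_pow, one_mul, mul_one]
        congr 1
        ext i' j'
        rw [Matrix.submatrix_apply, Fin.succAbove_last]
        rw [hPup _ _ (by rw [Fin.coe_castSucc]; exact i'.isLt)]
        rw [hNtj _ _ (by rw [Fin.val_succ]; omega), hNtj _ _ (by rw [Fin.val_succ]; omega)]
        simp only [Fin.coe_castSucc, Fin.val_succ]
        rw [show i'.1 + (j'.1+1) - 1 = i'.1 + j'.1 from by omega]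
        rw [show i'.1 + 1 + (j'.1+1) - 1 = i'.1 + j'.1 + 1 from by omega]
        show _ = ((gg f (i'.1+j'.1) + gg f (i'.1+j'.1+1) : ℤ) : ZMod 2)
        push_cast
        ring
      · intro i _ hine
        rw [hP0 i, if_neg (fun h => hine (Fin.ext (by rw [Fin.val_last]; exact h)))]
        ring
      · intro h; exact absurd (Finset.mem_univ _) h
    rw [← hLN, hexp]
    exact F2det (sb f) hs0 hrecs m
  constructor
  · exact ⟨(NN f m).det, by rw [hfac]; ring⟩
  · have hqu : hankel f (m+1) / 2^m = (NN f m).det := by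
      rw [hfac]
      exact Int.mul_ediv_cancel _ (by positivity)
    rw [hqu]
    rcases Int.even_or_odd ((NN f m).det) with he | ho
    · exfalso
      obtain ⟨t, ht⟩ := he
      rw [ht] at hdet2
      push_cast at hdet2
      have h1 : (0 : ZMod 2) = 1 := by
        rw [← zmod2_add_self (((t : ℤ) : ZMod 2))]
        exact_mod_cast hdet2
      exact absurd h1 (by decide)
    · exact ho
end

section
/- For every p ∈ P and q ∈ Q: (i) A_{p−1} ⊆ J and A_{q−1} ⊆ K; (ii) A_{q−1} ∩ J = ∅ and A_{p−1} ∩ K = ∅; (iii) β(A_{d−1} ∩ J) = J̄ and β(A_{d−1} ∩ K) = K̄, where β(k) = ⌊k/d⌋, and J̄ = J, K̄ = K if v_{d−1} = 1 while J̄ = K, K̄ = J if v_{d−1} = −1. -/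
private lemma mod_self_add (d m a : ℕ) (ha : a < d) : (d * m + a) % d = a := by
  rw [Nat.mul_add_mod]; exact Nat.mod_eq_of_lt ha

private lemma key0 (d m n a b k : ℕ) (ha0 : 0 < a) (had : a < d)
    (hb0 : 0 < b) (hbd : b < d)
    (h : d * m + a = (d * n + b) * d ^ k) : k = 0 ∧ a = b := by
  cases k with
  | zero =>
      refine ⟨rfl, ?_⟩
      have h1 : (d * m + a) % d = a := mod_self_add d m a had
      have h2 : (d * n + b) % d = b := mod_self_add d n b hbd
      rw [pow_zero, mul_one] at h
      rw [h, h2] at h1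
      omega
  | succ k =>
      exfalso
      have h1 : (d * m + a) % d = a := mod_self_add d m a had
      have h2 : ((d * n + b) * d ^ (k + 1)) % d = 0 := by
        rw [pow_succ, ← mul_assoc, Nat.mul_mod_left]
      rw [h, h2] at h1
      omega

private lemma fwd (d n m b k t : ℕ) (hd : 0 < d) (hb0 : 0 < b) (hbd : b < d)
    (ht : t = d * n + (d - 1)) (h : t + 1 = (d * m + b) * d ^ k) :
    ∃ k', k = k' + 1 ∧ t / d + 1 = (d * m + b) * d ^ k' := by
  have ht1 : t + 1 = d * (n + 1) := by
    rw [Nat.mul_succ]; omega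
  cases k with
  | zero =>
      exfalso
      rw [pow_zero, mul_one] at h
      have h1 : (d * (n + 1)) % d = 0 := Nat.mul_mod_right d (n + 1)
      have h2 : (d * m + b) % d = b := mod_self_add d m b hbd
      rw [← ht1, h, h2] at h1
      omega
  | succ k =>
      refine ⟨k, rfl, ?_⟩
      have hc : 0 < (d * m + b) * d ^ k :=
        Nat.mul_pos (by omega) (pow_pos hd k)
      set c := (d * m + b) * d ^ k with hcdef
      have h' : t + 1 = d * c := by rw [h, pow_succ, hcdef]; ring
      have hms : d * c = d * (c - 1) + d := by
        have h3 : c - 1 + 1 = c := by omega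
        calc d * c = d * ((c - 1) + 1) := by rw [h3]
          _ = d * (c - 1) + d := Nat.mul_succ _ _
      have ht' : t = d * (c - 1) + (d - 1) := by omega
      have hdiv : t / d = c - 1 := by
        rw [ht', Nat.mul_add_div hd]
        have : (d - 1) / d = 0 := Nat.div_eq_of_lt (by omega)
        omega
      omega

private lemma bwd (d s c k : ℕ) (hd : 0 < d) (hc : 0 < c) (hs : s + 1 = c * d ^ k) :
    (∃ n, d * (s + 1) - 1 = d * n + (d - 1)) ∧
    (d * (s + 1) - 1) + 1 = c * d ^ (k + 1) ∧ (d * (s + 1) - 1) / d = s := by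
  have h1 : d * (s + 1) - 1 + 1 = d * (s + 1) := by
    have : 0 < d * (s + 1) := Nat.mul_pos hd (Nat.succ_pos s)
    omega
  have h2 : d * (s + 1) = d * s + d := Nat.mul_succ d s
  refine ⟨⟨s, by omega⟩, ?_, ?_⟩
  · rw [h1, hs, pow_succ]; ring
  · have h3 : d * (s + 1) - 1 = d * s + (d - 1) := by omega
    rw [h3, Nat.mul_add_div hd, Nat.div_eq_of_lt (by omega : d - 1 < d)]
    omega

/-- Lemma on the sets `J`, `K` and the residue classes `A_i`:
(i) `A_{p−1} ⊆ J` and `A_{q−1} ⊆ K`; (ii) `A_{q−1} ∩ J = ∅` and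
(iii) `β(A_{d−1} ∩ J) = J̄` and `β(A_{d−1} ∩ K) = K̄`. -/
theorem J_K_set_lemma
    (d : ℕ) (hd : 1 ≤ d)
    (v : ℕ → ℤ) (hv0 : v 0 = 1) (hv : ∀ i < d, v i = 1 ∨ v i = -1)
    (P Q J K : Set ℕ)
    (hP : P = {i | 1 ≤ i ∧ i ≤ d - 1 ∧ v (i - 1) ≠ v i})
    (hQ : Q = {i | 1 ≤ i ∧ i ≤ d - 1 ∧ v (i - 1) = v i})
    (hJKneg : v (d - 1) = -1 →
      J = {t | ∃ n k p : ℕ, p ∈ P ∧ t + 1 = (d * n + p) * d ^ (2 * k)} ∪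
          {t | ∃ n k q : ℕ, q ∈ Q ∧ t + 1 = (d * n + q) * d ^ (2 * k + 1)} ∧
      K = {t | ∃ n k q : ℕ, q ∈ Q ∧ t + 1 = (d * n + q) * d ^ (2 * k)} ∪
          {t | ∃ n k p : ℕ, p ∈ P ∧ t + 1 = (d * n + p) * d ^ (2 * k + 1)})
    (hJKpos : v (d - 1) = 1 →
      J = {t | ∃ n k p : ℕ, p ∈ P ∧ t + 1 = (d * n + p) * d ^ k} ∧
      K = {t | ∃ n k q : ℕ, q ∈ Q ∧ t + 1 = (d * n + q) * d ^ k})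
    (A : ℕ → Set ℕ) (hA : ∀ i, A i = {k | ∃ n : ℕ, k = d * n + i}) :
    ∀ p ∈ P, ∀ q ∈ Q,
      (A (p - 1) ⊆ J ∧ A (q - 1) ⊆ K) ∧
      (A (q - 1) ∩ J = ∅ ∧ A (p - 1) ∩ K = ∅) ∧
      (v (d - 1) = 1 →
        (fun k => k / d) '' (A (d - 1) ∩ J) = J ∧
        (fun k => k / d) '' (A (d - 1) ∩ K) = K) ∧
      (v (d - 1) = -1 →
        (fun k => k / d) '' (A (d - 1) ∩ J) = K ∧
        (fun k => k / d) '' (A (d - 1) ∩ K) = J) := by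
  intro p hp q hq
  have hp' := hp; have hq' := hq
  rw [hP] at hp'; rw [hQ] at hq'
  obtain ⟨hp1, hp2, hpv⟩ := hp'
  obtain ⟨hq1, hq2, hqv⟩ := hq'
  have hd2 : 2 ≤ d := by omega
  have hpd : p < d := by omega
  have hqd : q < d := by omega
  have hPQ : ∀ a b : ℕ, a ∈ P → b ∈ Q → a ≠ b := by
    intro a b haP hbQ hab
    rw [hP] at haP; rw [hQ] at hbQ
    exact haP.2.2 (hab ▸ hbQ.2.2)
  -- bounds from membership
  have hPbd : ∀ a : ℕ, a ∈ P → 1 ≤ a ∧ a < d := by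
    intro a haP; rw [hP] at haP
    exact ⟨haP.1, by have := haP.2.1; omega⟩
  have hQbd : ∀ a : ℕ, a ∈ Q → 1 ≤ a ∧ a < d := by
    intro a haQ; rw [hQ] at haQ
    exact ⟨haQ.1, by have := haQ.2.1; omega⟩
  rcases hv (d - 1) (by omega) with hsign | hsign
  · -- positive case
    obtain ⟨hJ, hK⟩ := hJKpos hsign
    refine ⟨⟨?_, ?_⟩, ⟨?_, ?_⟩, ?_, ?_⟩
    · -- A (p-1) ⊆ J
      intro t ht
      rw [hA] at ht; obtain ⟨n, rfl⟩ := ht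
      rw [hJ]
      exact ⟨n, 0, p, hp, by rw [pow_zero, mul_one]; omega⟩
    · -- A (q-1) ⊆ K
      intro t ht
      rw [hA] at ht; obtain ⟨n, rfl⟩ := ht
      rw [hK]
      exact ⟨n, 0, q, hq, by rw [pow_zero, mul_one]; omega⟩
    · -- A (q-1) ∩ J = ∅
      ext t
      simp only [Set.mem_inter_iff, Set.mem_empty_iff_false, iff_false, not_and]
      intro htA htJ
      rw [hA] at htA; obtain ⟨n, rfl⟩ := htA
      rw [hJ] at htJ; obtain ⟨m, k, p', hp'P, heq⟩ := htJ
      obtain ⟨hb1, hb2⟩ := hPbd p' hp'P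
      have heq' : d * n + q = (d * m + p') * d ^ k := by omega
      obtain ⟨-, hqp⟩ := key0 d n m q p' k (by omega) hqd (by omega) hb2 heq'
      exact hPQ p' q hp'P hq hqp.symm
    · -- A (p-1) ∩ K = ∅
      ext t
      simp only [Set.mem_inter_iff, Set.mem_empty_iff_false, iff_false, not_and]
      intro htA htK
      rw [hA] at htA; obtain ⟨n, rfl⟩ := htA
      rw [hK] at htK; obtain ⟨m, k, q', hq'Q, heq⟩ := htK
      obtain ⟨hb1, hb2⟩ := hQbd q' hq'Q
      have heq' : d * n + p = (d * m + q') * d ^ k := by omega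
      obtain ⟨-, hpq'⟩ := key0 d n m p q' k (by omega) hpd (by omega) hb2 heq'
      exact hPQ p q' hp hq'Q hpq'
    · -- v(d-1) = 1 case images
      intro _
      constructor
      · ext s
        simp only [Set.mem_image, Set.mem_inter_iff]
        constructor
        · rintro ⟨t, ⟨htA, htJ⟩, rfl⟩
          rw [hA] at htA; obtain ⟨n, hn⟩ := htA
          rw [hJ] at htJ; obtain ⟨m, k, p', hp'P, heq⟩ := htJ
          obtain ⟨hb1, hb2⟩ := hPbd p' hp'P
          obtain ⟨k', -, hdiv⟩ := fwd d n m p' k t (by omega) (by omega) hb2 hn heq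
          rw [hJ]
          exact ⟨m, k', p', hp'P, hdiv⟩
        · intro hs
          rw [hJ] at hs; obtain ⟨m, k, p', hp'P, heq⟩ := hs
          obtain ⟨hb1, hb2⟩ := hPbd p' hp'P
          obtain ⟨⟨n, hn⟩, hmem, hdiv⟩ := bwd d s (d * m + p') k (by omega) (by omega) heq
          refine ⟨d * (s + 1) - 1, ⟨?_, ?_⟩, hdiv⟩
          · rw [hA]; exact ⟨n, hn⟩
          · rw [hJ]; exact ⟨m, k + 1, p', hp'P, hmem⟩
      · ext s
        simp only [Set.mem_image, Set.mem_inter_iff]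
        constructor
        · rintro ⟨t, ⟨htA, htK⟩, rfl⟩
          rw [hA] at htA; obtain ⟨n, hn⟩ := htA
          rw [hK] at htK; obtain ⟨m, k, q', hq'Q, heq⟩ := htK
          obtain ⟨hb1, hb2⟩ := hQbd q' hq'Q
          obtain ⟨k', -, hdiv⟩ := fwd d n m q' k t (by omega) (by omega) hb2 hn heq
          rw [hK]
          exact ⟨m, k', q', hq'Q, hdiv⟩
        · intro hs
          rw [hK] at hs; obtain ⟨m, k, q', hq'Q, heq⟩ := hs
          obtain ⟨hb1, hb2⟩ := hQbd q' hq'Q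
          obtain ⟨⟨n, hn⟩, hmem, hdiv⟩ := bwd d s (d * m + q') k (by omega) (by omega) heq
          refine ⟨d * (s + 1) - 1, ⟨?_, ?_⟩, hdiv⟩
          · rw [hA]; exact ⟨n, hn⟩
          · rw [hK]; exact ⟨m, k + 1, q', hq'Q, hmem⟩
    · -- v(d-1) = -1 impossible here
      intro h
      rw [hsign] at h
      norm_num at h
  · -- negative case
    obtain ⟨hJ, hK⟩ := hJKneg hsign
    refine ⟨⟨?_, ?_⟩, ⟨?_, ?_⟩, ?_, ?_⟩
    · -- A (p-1) ⊆ J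
      intro t ht
      rw [hA] at ht; obtain ⟨n, rfl⟩ := ht
      rw [hJ]
      exact Or.inl ⟨n, 0, p, hp, by rw [show 2 * 0 = 0 from rfl, pow_zero, mul_one]; omega⟩
    · -- A (q-1) ⊆ K
      intro t ht
      rw [hA] at ht; obtain ⟨n, rfl⟩ := ht
      rw [hK]
      exact Or.inl ⟨n, 0, q, hq, by rw [show 2 * 0 = 0 from rfl, pow_zero, mul_one]; omega⟩
    · -- A (q-1) ∩ J = ∅
      ext t
      simp only [Set.mem_inter_iff, Set.mem_empty_iff_false, iff_false, not_and]
      intro htA htJ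
      rw [hA] at htA; obtain ⟨n, rfl⟩ := htA
      rw [hJ] at htJ
      rcases htJ with ⟨m, k, p', hp'P, heq⟩ | ⟨m, k, q', hq'Q, heq⟩
      · obtain ⟨hb1, hb2⟩ := hPbd p' hp'P
        have heq' : d * n + q = (d * m + p') * d ^ (2 * k) := by omega
        obtain ⟨-, hqp⟩ := key0 d n m q p' (2 * k) (by omega) hqd (by omega) hb2 heq'
        exact hPQ p' q hp'P hq hqp.symm
      · obtain ⟨hb1, hb2⟩ := hQbd q' hq'Q
        have heq' : d * n + q = (d * m + q') * d ^ (2 * k + 1) := by omega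
        obtain ⟨hk0, -⟩ := key0 d n m q q' (2 * k + 1) (by omega) hqd (by omega) hb2 heq'
        omega
    · -- A (p-1) ∩ K = ∅
      ext t
      simp only [Set.mem_inter_iff, Set.mem_empty_iff_false, iff_false, not_and]
      intro htA htK
      rw [hA] at htA; obtain ⟨n, rfl⟩ := htA
      rw [hK] at htK
      rcases htK with ⟨m, k, q', hq'Q, heq⟩ | ⟨m, k, p', hp'P, heq⟩
      · obtain ⟨hb1, hb2⟩ := hQbd q' hq'Q
        have heq' : d * n + p = (d * m + q') * d ^ (2 * k) := by omega
        obtain ⟨-, hpq'⟩ := key0 d n m p q' (2 * k) (by omega) hpd (by omega) hb2 heq'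
        exact hPQ p q' hp hq'Q hpq'
      · obtain ⟨hb1, hb2⟩ := hPbd p' hp'P
        have heq' : d * n + p = (d * m + p') * d ^ (2 * k + 1) := by omega
        obtain ⟨hk0, -⟩ := key0 d n m p p' (2 * k + 1) (by omega) hpd (by omega) hb2 heq'
        omega
    · -- v(d-1) = 1 impossible here
      intro h
      rw [hsign] at h
      norm_num at h
    · -- images, negative case
      intro _
      constructor
      · -- β(A(d-1) ∩ J) = K
        ext s
        simp only [Set.mem_image, Set.mem_inter_iff]
        constructor
        · rintro ⟨t, ⟨htA, htJ⟩, rfl⟩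
          rw [hA] at htA; obtain ⟨n, hn⟩ := htA
          rw [hJ] at htJ
          rcases htJ with ⟨m, k, p', hp'P, heq⟩ | ⟨m, k, q', hq'Q, heq⟩
          · obtain ⟨hb1, hb2⟩ := hPbd p' hp'P
            obtain ⟨k', hk, hdiv⟩ := fwd d n m p' (2 * k) t (by omega) (by omega) hb2 hn heq
            have hk' : k' = 2 * (k - 1) + 1 := by omega
            rw [hk'] at hdiv
            rw [hK]
            exact Or.inr ⟨m, k - 1, p', hp'P, hdiv⟩
          · obtain ⟨hb1, hb2⟩ := hQbd q' hq'Q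
            obtain ⟨k', hk, hdiv⟩ := fwd d n m q' (2 * k + 1) t (by omega) (by omega) hb2 hn heq
            have hk' : k' = 2 * k := by omega
            rw [hk'] at hdiv
            rw [hK]
            exact Or.inl ⟨m, k, q', hq'Q, hdiv⟩
        · intro hs
          rw [hK] at hs
          rcases hs with ⟨m, k, q', hq'Q, heq⟩ | ⟨m, k, p', hp'P, heq⟩
          · obtain ⟨hb1, hb2⟩ := hQbd q' hq'Q
            obtain ⟨⟨n, hn⟩, hmem, hdiv⟩ := bwd d s (d * m + q') (2 * k) (by omega) (by omega) heq
            refine ⟨d * (s + 1) - 1, ⟨?_, ?_⟩, hdiv⟩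
            · rw [hA]; exact ⟨n, hn⟩
            · rw [hJ]; exact Or.inr ⟨m, k, q', hq'Q, hmem⟩
          · obtain ⟨hb1, hb2⟩ := hPbd p' hp'P
            obtain ⟨⟨n, hn⟩, hmem, hdiv⟩ :=
              bwd d s (d * m + p') (2 * k + 1) (by omega) (by omega) heq
            rw [show 2 * k + 1 + 1 = 2 * (k + 1) from by ring] at hmem
            refine ⟨d * (s + 1) - 1, ⟨?_, ?_⟩, hdiv⟩
            · rw [hA]; exact ⟨n, hn⟩
            · rw [hJ]; exact Or.inl ⟨m, k + 1, p', hp'P, hmem⟩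
      · -- β(A(d-1) ∩ K) = J
        ext s
        simp only [Set.mem_image, Set.mem_inter_iff]
        constructor
        · rintro ⟨t, ⟨htA, htK⟩, rfl⟩
          rw [hA] at htA; obtain ⟨n, hn⟩ := htA
          rw [hK] at htK
          rcases htK with ⟨m, k, q', hq'Q, heq⟩ | ⟨m, k, p', hp'P, heq⟩
          · obtain ⟨hb1, hb2⟩ := hQbd q' hq'Q
            obtain ⟨k', hk, hdiv⟩ := fwd d n m q' (2 * k) t (by omega) (by omega) hb2 hn heq
            have hk' : k' = 2 * (k - 1) + 1 := by omega
            rw [hk'] at hdiv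
            rw [hJ]
            exact Or.inr ⟨m, k - 1, q', hq'Q, hdiv⟩
          · obtain ⟨hb1, hb2⟩ := hPbd p' hp'P
            obtain ⟨k', hk, hdiv⟩ := fwd d n m p' (2 * k + 1) t (by omega) (by omega) hb2 hn heq
            have hk' : k' = 2 * k := by omega
            rw [hk'] at hdiv
            rw [hJ]
            exact Or.inl ⟨m, k, p', hp'P, hdiv⟩
        · intro hs
          rw [hJ] at hs
          rcases hs with ⟨m, k, p', hp'P, heq⟩ | ⟨m, k, q', hq'Q, heq⟩
          · obtain ⟨hb1, hb2⟩ := hPbd p' hp'P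
            obtain ⟨⟨n, hn⟩, hmem, hdiv⟩ := bwd d s (d * m + p') (2 * k) (by omega) (by omega) heq
            refine ⟨d * (s + 1) - 1, ⟨?_, ?_⟩, hdiv⟩
            · rw [hA]; exact ⟨n, hn⟩
            · rw [hK]; exact Or.inr ⟨m, k, p', hp'P, hmem⟩
          · obtain ⟨hb1, hb2⟩ := hQbd q' hq'Q
            obtain ⟨⟨n, hn⟩, hmem, hdiv⟩ :=
              bwd d s (d * m + q') (2 * k + 1) (by omega) (by omega) heq
            rw [show 2 * k + 1 + 1 = 2 * (k + 1) from by ring] at hmem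
            refine ⟨d * (s + 1) - 1, ⟨?_, ?_⟩, hdiv⟩
            · rw [hA]; exact ⟨n, hn⟩
            · rw [hK]; exact Or.inl ⟨m, k + 1, q', hq'Q, hmem⟩
end
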